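/- Let G be a one-sided POSG and H the minimax operator. Then there exists a unique convex continuous function V† : Δ(S) → ℝ satisfying HV† = V†. Moreover, V† is δ-Lipschitz with respect to the ℓ1 metric, takes values in [L, U], and for every convex continuous V₀ : Δ(S) → ℝ with values in [L, U], the iterates V_{n+1} = H V_n (V_0 given) converge uniformly on Δ(S) to V†. -/

import Mathlib

open scoped BigOperators

noncomputable section

/-- ℓ1 distance on `S → ℝ`. -/
def l1dist {S : Type*} [Fintype S] (p q : S → ℝ) : ℝ := ∑ s, |p s - q s|

/-- Evaluation at a belief `b` of the linear function on the simplex with vertex values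
`α : S → ℝ`. -/
def lineval {S : Type*} [Fintype S] (α : S → ℝ) (b : S → ℝ) : ℝ := ∑ s, b s * α s

/-- `f` is `k`-Lipschitz with respect to the ℓ1 metric on the probability simplex. -/
def LipOnSimplex {S : Type*} [Fintype S] (k : ℝ) (f : (S → ℝ) → ℝ) : Prop :=
  ∀ p ∈ stdSimplex ℝ S, ∀ q ∈ stdSimplex ℝ S, |f p - f q| ≤ k * l1dist p q

/-- A one-sided partially observable stochastic game. -/
structure OSPOSG (S A1 A2 O : Type*) [Fintype S] [Fintype A1] [Fintype A2] [Fintype O] where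
  /-- transition function: `T s a1 a2 o s'` is the probability of observing `o` and moving
  to `s'` from `s` under actions `a1, a2`. -/
  T : S → A1 → A2 → O → S → ℝ
  T_nonneg : ∀ s a1 a2 o s', 0 ≤ T s a1 a2 o s'
  T_sum : ∀ s a1 a2, ∑ o, ∑ s', T s a1 a2 o s' = 1
  /-- reward function of player 1 -/
  R : S → A1 → A2 → ℝ
  /-- discount factor -/
  γ : ℝ
  γ_pos : 0 < γ
  γ_lt_one : γ < 1

namespace OSPOSG

variable {S A1 A2 O : Type*} [Fintype S] [Fintype A1] [Fintype A2] [Fintype O]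
  [Nonempty S] [Nonempty A1] [Nonempty A2] [Nonempty O]

/-- The minimum reward `r_min`. -/
def rmin (G : OSPOSG S A1 A2 O) : ℝ :=
  Finset.univ.inf' Finset.univ_nonempty fun x : S × A1 × A2 => G.R x.1 x.2.1 x.2.2

/-- The maximum reward `r_max`. -/
def rmax (G : OSPOSG S A1 A2 O) : ℝ :=
  Finset.univ.sup' Finset.univ_nonempty fun x : S × A1 × A2 => G.R x.1 x.2.1 x.2.2

/-- `L = r_min / (1 - γ)`. -/
def Lval (G : OSPOSG S A1 A2 O) : ℝ := G.rmin / (1 - G.γ)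

/-- `U = r_max / (1 - γ)`. -/
def Uval (G : OSPOSG S A1 A2 O) : ℝ := G.rmax / (1 - G.γ)

/-- `δ = (U - L) / 2`. -/
def δval (G : OSPOSG S A1 A2 O) : ℝ := (G.Uval - G.Lval) / 2

/-- The set of stage strategies of player 2. -/
def Pi2 (S A2 : Type*) [Fintype A2] : Set (S → A2 → ℝ) :=
  {π2 | ∀ s, π2 s ∈ stdSimplex ℝ A2}

/-- Vertex values of the value composition `valcomp(π1, ᾱ)`. -/
def valcompVert (G : OSPOSG S A1 A2 O) (π1 : A1 → ℝ) (αb : A1 → O → S → ℝ) (s : S) : ℝ :=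
  Finset.univ.inf' Finset.univ_nonempty fun a2 =>
    ∑ a1, π1 a1 * (G.R s a1 a2 + G.γ * ∑ o, ∑ s', G.T s a1 a2 o s' * αb a1 o s')

/-- The value composition `valcomp(π1, ᾱ)`, a linear function of the belief `b`. -/
def valcomp (G : OSPOSG S A1 A2 O) (π1 : A1 → ℝ) (αb : A1 → O → S → ℝ) (b : S → ℝ) : ℝ :=
  ∑ s, b s * G.valcompVert π1 αb s

/-- `Pr_{b,π1,π2}[a1, o]`: the probability that player 1 plays `a1` and observes `o`. -/
def Pr (G : OSPOSG S A1 A2 O) (b : S → ℝ) (π1 : A1 → ℝ) (π2 : S → A2 → ℝ)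
    (a1 : A1) (o : O) : ℝ :=
  ∑ s, ∑ a2, ∑ s', b s * π1 a1 * π2 s a2 * G.T s a1 a2 o s'

/-- The updated belief `τ(b, a1, π2, o)` of player 1 (junk value `0` if the normalizing
constant vanishes; such terms are always multiplied by a zero probability below). -/
def beliefUpd (G : OSPOSG S A1 A2 O) (b : S → ℝ) (a1 : A1) (π2 : S → A2 → ℝ) (o : O) :
    S → ℝ := fun s' =>
  (∑ s, ∑ a2, b s * π2 s a2 * G.T s a1 a2 o s') /
    (∑ s'', ∑ s, ∑ a2, b s * π2 s a2 * G.T s a1 a2 o s'')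

/-- The stage utility `u^{V,b}(π1, π2)`. -/
def stageU (G : OSPOSG S A1 A2 O) (V : (S → ℝ) → ℝ) (b : S → ℝ)
    (π1 : A1 → ℝ) (π2 : S → A2 → ℝ) : ℝ :=
  (∑ s, ∑ a1, ∑ a2, b s * π1 a1 * π2 s a2 * G.R s a1 a2) +
    G.γ * ∑ a1, ∑ o, G.Pr b π1 π2 a1 o * V (G.beliefUpd b a1 π2 o)

/-- The minimax (Bellman) operator `[HV](b) = sup_{π1} inf_{π2} u^{V,b}(π1,π2)`. -/
def Hop (G : OSPOSG S A1 A2 O) (V : (S → ℝ) → ℝ) (b : S → ℝ) : ℝ :=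
  ⨆ π1 : stdSimplex ℝ A1, ⨅ π2 : Pi2 S A2, G.stageU V b π1.1 π2.1

end OSPOSG

open Filter


section Minimax

variable {ι F : Type*} [Fintype ι] [DecidableEq ι]
  [NormedAddCommGroup F] [NormedSpace ℝ F]

lemma minimax_aux (C : Set (ι → ℝ)) (D : Set F)
    (hCconv : Convex ℝ C) (hCne : C.Nonempty)
    (hDconv : Convex ℝ D) (hDcomp : IsCompact D)
    (g : ι → F → ℝ) (hgc : ∀ i, Continuous (g i))
    (hga : ∀ i (d₁ d₂ : F) (a b : ℝ), a + b = 1 →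
      g i (a • d₁ + b • d₂) = a * g i d₁ + b * g i d₂)
    (t : ℝ)
    (hcov : ∀ d ∈ D, ∃ c ∈ C, (∑ i, c i * g i d) < t) :
    ∃ c ∈ C, ∀ d ∈ D, (∑ i, c i * g i d) < t := by
  classical
  rcases D.eq_empty_or_nonempty with hD | hDne
  · rcases hCne with ⟨c, hc⟩
    exact ⟨c, hc, by simp [hD]⟩
  set Φ : (ι → ℝ) → F → ℝ := fun c d => ∑ i, c i * g i d with hΦdef
  have hΦc : ∀ c, Continuous (Φ c) := by
    intro c
    exact continuous_finset_sum _ (fun i _ => continuous_const.mul (hgc i))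
  have hΦaff : ∀ (c : ι → ℝ) (d₁ d₂ : F) (a b : ℝ), a + b = 1 →
      Φ c (a • d₁ + b • d₂) = a * Φ c d₁ + b * Φ c d₂ := by
    intro c d₁ d₂ a b hab
    simp only [hΦdef, Finset.mul_sum]
    rw [← Finset.sum_add_distrib]
    refine Finset.sum_congr rfl fun i _ => ?_
    rw [hga i d₁ d₂ a b hab]; ring
  obtain ⟨s, hs⟩ := hDcomp.elim_finite_subcover (fun c : C => {d | Φ c.1 d < t})
    (fun c => isOpen_lt (hΦc c.1) continuous_const)
    (by
      intro d hd
      obtain ⟨c, hcC, hct⟩ := hcov d hd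
      exact Set.mem_iUnion.2 ⟨⟨c, hcC⟩, hct⟩)
  -- the finite-dimensional image space
  set Tmap : F → (↥s → ℝ) := fun d j => Φ j.1.1 d with hTmap
  have hTcont : Continuous Tmap := continuous_pi fun j => hΦc _
  set Z : Set (↥s → ℝ) := Tmap '' D with hZ
  set Q : Set (↥s → ℝ) := {x | ∀ j, t ≤ x j} with hQ
  have hZcomp : IsCompact Z := hDcomp.image hTcont
  have hZconv : Convex ℝ Z := by
    rintro z₁ ⟨d₁, hd₁, rfl⟩ z₂ ⟨d₂, hd₂, rfl⟩ a b ha hb hab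
    refine ⟨a • d₁ + b • d₂, hDconv hd₁ hd₂ ha hb hab, ?_⟩
    funext j
    simp only [hTmap, Pi.add_apply, Pi.smul_apply, smul_eq_mul]
    rw [hΦaff _ _ _ _ _ hab]
  have hQconv : Convex ℝ Q := by
    rintro x hx y hy a b ha hb hab j
    have : a * t + b * t ≤ a * x j + b * y j := by
      gcongr; exacts [hx j, hy j]
    calc t = a * t + b * t := by rw [← add_mul, hab, one_mul]
    _ ≤ a * x j + b * y j := this
    _ = (a • x + b • y) j := by simp [Pi.add_apply]
  have hQclosed : IsClosed Q := by
    have : Q = ⋂ j, {x : ↥s → ℝ | t ≤ x j} := by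
      ext x; simp [hQ, Set.mem_iInter]
    rw [this]
    exact isClosed_iInter fun j => isClosed_le continuous_const (continuous_apply j)
  have hdisj : Disjoint Z Q := by
    rw [Set.disjoint_left]
    rintro z ⟨d, hd, rfl⟩ hzQ
    have := hs hd
    simp only [Set.mem_iUnion] at this
    obtain ⟨j, hjs, hjd⟩ := this
    exact absurd (hzQ ⟨j, hjs⟩) (not_le.2 hjd)
  obtain ⟨f, u, v, hfu, huv, hfv⟩ :=
    geometric_hahn_banach_compact_closed hZconv hZcomp hQconv hQclosed hdisj
  set lam : ↥s → ℝ := fun j => f (Pi.single j 1) with hlam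
  have hf_eq : ∀ x : ↥s → ℝ, f x = ∑ j, x j * lam j := by
    intro x
    conv_lhs => rw [pi_eq_sum_univ x]
    rw [map_sum]
    refine Finset.sum_congr rfl fun j _ => ?_
    rw [map_smul, smul_eq_mul]
    have h2 : (fun j' => if j = j' then (1:ℝ) else 0) = Pi.single j 1 := by
      funext j'; simp [Pi.single_apply, eq_comm]
    rw [h2]
  have hconstQ : ∀ M : ℝ, 0 ≤ M → ∀ j₀ : ↥s, ((fun _ => t) + M • (Pi.single j₀ 1 : ↥s → ℝ)) ∈ Q := by
    intro M hM j₀ j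
    simp only [Pi.add_apply, Pi.smul_apply, smul_eq_mul, Pi.single_apply]
    by_cases h : j = j₀ <;> simp [h, hM, le_add_iff_nonneg_right]
  have htv : v < f (fun _ => t) := by
    have : ((fun _ => t) : ↥s → ℝ) ∈ Q := fun j => le_refl t
    exact hfv _ this
  have hlam0 : ∀ j, 0 ≤ lam j := by
    intro j
    by_contra hneg
    push_neg at hneg
    set M : ℝ := (f (fun _ => t) - v + 1) / (-lam j) with hM
    have hMpos : 0 < M := by
      apply div_pos
      · linarith
      · linarith
    have h1 := hfv _ (hconstQ M hMpos.le j)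
    rw [map_add, map_smul] at h1
    have : f (Pi.single j 1) = lam j := rfl
    rw [this] at h1
    simp only [smul_eq_mul] at h1
    have : M * lam j = -(f (fun _ => t) - v + 1) := by
      have hl : lam j ≠ 0 := ne_of_lt hneg
      rw [hM]; field_simp
    rw [this] at h1
    linarith
  set Sl : ℝ := ∑ j, lam j with hSl
  have hSlpos : 0 < Sl := by
    rcases lt_or_eq_of_le (Finset.sum_nonneg fun j _ => hlam0 j) with h | h
    · exact h
    · exfalso
      have hall : ∀ j ∈ Finset.univ, lam j = 0 := by
        intro j _
        exact ((Finset.sum_eq_zero_iff_of_nonneg (fun j _ => hlam0 j)).1 h.symm) j (Finset.mem_univ j)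
      have hf0 : ∀ x, f x = 0 := by
        intro x
        rw [hf_eq]
        exact Finset.sum_eq_zero fun j _ => by rw [hall j (Finset.mem_univ j), mul_zero]
      obtain ⟨d₀, hd₀⟩ := hDne
      have h1 : f (Tmap d₀) < u := hfu _ ⟨d₀, hd₀, rfl⟩
      rw [hf0] at h1
      rw [hf0] at htv
      linarith
  -- the convex combination
  set w : ↥s → ℝ := fun j => lam j / Sl with hw
  have hwnn : ∀ j, 0 ≤ w j := fun j => div_nonneg (hlam0 j) hSlpos.le
  have hwsum : ∑ j, w j = 1 := by
    simp only [hw, ← Finset.sum_div]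
    rw [div_self hSlpos.ne']
  set cbar : ι → ℝ := ∑ j : ↥s, w j • (j.1.1 : ι → ℝ) with hcbar
  have hcbarC : cbar ∈ C := by
    apply hCconv.sum_mem (fun j _ => hwnn j) hwsum
    intro j _
    exact j.1.2
  refine ⟨cbar, hcbarC, ?_⟩
  intro d hd
  have hswap : Φ cbar d = ∑ j : ↥s, w j * Φ j.1.1 d := by
    simp only [hΦdef, hcbar, Finset.sum_apply, Pi.smul_apply, smul_eq_mul, Finset.sum_mul,
      Finset.mul_sum, mul_assoc]
    rw [Finset.sum_comm]
  have hfT : f (Tmap d) = ∑ j : ↥s, lam j * Φ j.1.1 d := by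
    rw [hf_eq]
    refine Finset.sum_congr rfl fun j _ => ?_
    rw [mul_comm]
  have h1 : f (Tmap d) < u := hfu _ ⟨d, hd, rfl⟩
  have h2 : f ((fun _ => t) : ↥s → ℝ) = t * Sl := by
    rw [hf_eq, hSl, Finset.mul_sum]
  have hut : u < t * Sl := by rw [← h2]; linarith
  have : Φ cbar d = (∑ j : ↥s, lam j * Φ j.1.1 d) / Sl := by
    rw [hswap, Finset.sum_div]
    refine Finset.sum_congr rfl fun j _ => ?_
    rw [hw]; ring
  rw [show (∑ i, cbar i * g i d) = Φ cbar d from rfl, this, ← hfT]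
  rw [div_lt_iff₀ hSlpos]
  calc f (Tmap d) < u := h1
  _ < t * Sl := hut

end Minimax

namespace OSPOSG

variable {S A1 A2 O : Type*} [Fintype S] [Fintype A1] [Fintype A2] [Fintype O]
  [Nonempty S] [Nonempty A1] [Nonempty A2] [Nonempty O]

/-- the box `[L,U]^S` -/
def box (G : OSPOSG S A1 A2 O) : Set (S → ℝ) :=
  {α | ∀ s, α s ∈ Set.Icc G.Lval G.Uval}

/-- sup of linear functions with vertex values in `Λ` -/
def VLam (Λ : Set (S → ℝ)) : (S → ℝ) → ℝ :=
  fun b => sSup ((fun α => lineval α b) '' Λ)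

/-- numerator of the belief update -/
def numf (G : OSPOSG S A1 A2 O) (b : S → ℝ) (π2 : S → A2 → ℝ) (a1 : A1) (o : O) (s' : S) : ℝ :=
  ∑ s, ∑ a2, b s * π2 s a2 * G.T s a1 a2 o s'

/-- denominator of the belief update -/
def Dn (G : OSPOSG S A1 A2 O) (b : S → ℝ) (π2 : S → A2 → ℝ) (a1 : A1) (o : O) : ℝ :=
  ∑ s', G.numf b π2 a1 o s'

lemma beliefUpd_eq (G : OSPOSG S A1 A2 O) (b : S → ℝ) (a1 : A1) (π2 : S → A2 → ℝ) (o : O) :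
    G.beliefUpd b a1 π2 o = fun s' => G.numf b π2 a1 o s' / G.Dn b π2 a1 o := rfl

section Basic

variable {G : OSPOSG S A1 A2 O} {b : S → ℝ} {π1 : A1 → ℝ} {π2 : S → A2 → ℝ}

lemma gamma_nonneg : (0:ℝ) ≤ G.γ := G.γ_pos.le

lemma one_sub_gamma_pos : (0:ℝ) < 1 - G.γ := by linarith [G.γ_lt_one]

lemma R_le_rmax (s : S) (a1 : A1) (a2 : A2) : G.R s a1 a2 ≤ G.rmax :=
  Finset.le_sup' (fun x : S × A1 × A2 => G.R x.1 x.2.1 x.2.2) (Finset.mem_univ (s, a1, a2))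

lemma rmin_le_R (s : S) (a1 : A1) (a2 : A2) : G.rmin ≤ G.R s a1 a2 :=
  Finset.inf'_le (fun x : S × A1 × A2 => G.R x.1 x.2.1 x.2.2) (Finset.mem_univ (s, a1, a2))

lemma rmin_le_rmax : G.rmin ≤ G.rmax := by
  obtain ⟨x⟩ : Nonempty (S × A1 × A2) := inferInstance
  exact le_trans (rmin_le_R x.1 x.2.1 x.2.2) (R_le_rmax x.1 x.2.1 x.2.2)

lemma Lval_le_Uval : G.Lval ≤ G.Uval := by
  have h := one_sub_gamma_pos (G := G)
  rw [Lval, Uval]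
  exact (div_le_div_iff_of_pos_right h).2 rmin_le_rmax

lemma Lval_fix : G.rmin + G.γ * G.Lval = G.Lval := by
  have h := one_sub_gamma_pos (G := G)
  rw [Lval]; field_simp; ring

lemma Uval_fix : G.rmax + G.γ * G.Uval = G.Uval := by
  have h := one_sub_gamma_pos (G := G)
  rw [Uval]; field_simp; ring

lemma delta_nonneg : (0:ℝ) ≤ G.δval :=
  div_nonneg (by linarith [Lval_le_Uval (G := G)]) (by norm_num)

lemma numf_nonneg (hb : b ∈ stdSimplex ℝ S) (hπ2 : π2 ∈ Pi2 S A2) (a1 : A1) (o : O) (s' : S) :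
    0 ≤ G.numf b π2 a1 o s' :=
  Finset.sum_nonneg fun s _ => Finset.sum_nonneg fun a2 _ =>
    mul_nonneg (mul_nonneg (hb.1 s) ((hπ2 s).1 a2)) (G.T_nonneg s a1 a2 o s')

lemma Dn_nonneg (hb : b ∈ stdSimplex ℝ S) (hπ2 : π2 ∈ Pi2 S A2) (a1 : A1) (o : O) :
    0 ≤ G.Dn b π2 a1 o :=
  Finset.sum_nonneg fun s' _ => numf_nonneg hb hπ2 a1 o s'

lemma Pr_eq (a1 : A1) (o : O) :
    G.Pr b π1 π2 a1 o = π1 a1 * G.Dn b π2 a1 o := by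
  rw [Pr, Dn]
  have h1 : ∀ s, ∑ a2, ∑ s', b s * π1 a1 * π2 s a2 * G.T s a1 a2 o s'
      = π1 a1 * ∑ a2, ∑ s', b s * π2 s a2 * G.T s a1 a2 o s' := by
    intro s
    rw [Finset.mul_sum]
    refine Finset.sum_congr rfl fun a2 _ => ?_
    rw [Finset.mul_sum]
    exact Finset.sum_congr rfl fun s' _ => by ring
  rw [Finset.sum_congr rfl fun s _ => h1 s, ← Finset.mul_sum]
  congr 1
  calc ∑ s, ∑ a2, ∑ s', b s * π2 s a2 * G.T s a1 a2 o s'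
      = ∑ s, ∑ s', ∑ a2, b s * π2 s a2 * G.T s a1 a2 o s' :=
        Finset.sum_congr rfl fun s _ => Finset.sum_comm
    _ = ∑ s', ∑ s, ∑ a2, b s * π2 s a2 * G.T s a1 a2 o s' := Finset.sum_comm
    _ = ∑ s', G.numf b π2 a1 o s' := rfl

lemma upd_mem_simplex (hb : b ∈ stdSimplex ℝ S) (hπ2 : π2 ∈ Pi2 S A2) {a1 : A1} {o : O}
    (hD : G.Dn b π2 a1 o ≠ 0) : G.beliefUpd b a1 π2 o ∈ stdSimplex ℝ S := by
  rw [beliefUpd_eq]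
  constructor
  · intro s'
    exact div_nonneg (numf_nonneg hb hπ2 a1 o s') (Dn_nonneg hb hπ2 a1 o)
  · rw [← Finset.sum_div, ← Dn, div_self hD]

lemma Dn_eq_zero_iff (hb : b ∈ stdSimplex ℝ S) (hπ2 : π2 ∈ Pi2 S A2) {a1 : A1} {o : O} :
    G.Dn b π2 a1 o = 0 ↔ ∀ s', G.numf b π2 a1 o s' = 0 := by
  rw [Dn]
  rw [Finset.sum_eq_zero_iff_of_nonneg fun s' _ => numf_nonneg hb hπ2 a1 o s']
  exact ⟨fun h s' => h s' (Finset.mem_univ s'), fun h s' _ => h s'⟩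

end Basic

end OSPOSG

namespace OSPOSG

variable {S A1 A2 O : Type*} [Fintype S] [Fintype A1] [Fintype A2] [Fintype O]
  [Nonempty S] [Nonempty A1] [Nonempty A2] [Nonempty O]

section VLamLemmas

variable {G : OSPOSG S A1 A2 O} {Λ : Set (S → ℝ)} {b p q : S → ℝ}

lemma lineval_continuous (b : S → ℝ) : Continuous fun α : S → ℝ => lineval α b :=
  continuous_finset_sum _ fun s _ => continuous_const.mul (continuous_apply s)

lemma lineval_le_of_box (hΛ : Λ ⊆ G.box) (hα : α ∈ Λ) (hb : b ∈ stdSimplex ℝ S) :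
    lineval α b ≤ G.Uval := by
  rw [lineval]
  calc ∑ s, b s * α s ≤ ∑ s, b s * G.Uval := by
        refine Finset.sum_le_sum fun s _ => mul_le_mul_of_nonneg_left ((hΛ hα) s).2 (hb.1 s)
  _ = G.Uval := by rw [← Finset.sum_mul, hb.2, one_mul]

lemma le_lineval_of_box (hΛ : Λ ⊆ G.box) (hα : α ∈ Λ) (hb : b ∈ stdSimplex ℝ S) :
    G.Lval ≤ lineval α b := by
  rw [lineval]
  calc G.Lval = ∑ s, b s * G.Lval := by rw [← Finset.sum_mul, hb.2, one_mul]
  _ ≤ ∑ s, b s * α s := by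
        refine Finset.sum_le_sum fun s _ => mul_le_mul_of_nonneg_left ((hΛ hα) s).1 (hb.1 s)

lemma lineval_abs_le_of_box (hΛ : Λ ⊆ G.box) (hα : α ∈ Λ) (b : S → ℝ) :
    lineval α b ≤ ∑ s, |b s| * (max |G.Lval| |G.Uval|) := by
  rw [lineval]
  refine Finset.sum_le_sum fun s _ => ?_
  calc b s * α s ≤ |b s * α s| := le_abs_self _
  _ = |b s| * |α s| := abs_mul _ _
  _ ≤ |b s| * max |G.Lval| |G.Uval| := by
      refine mul_le_mul_of_nonneg_left ?_ (abs_nonneg _)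
      rcases abs_le_max_abs_abs ((hΛ hα) s).1 ((hΛ hα) s).2 with h
      exact h

lemma VLam_bddAbove (hΛ : Λ ⊆ G.box) (b : S → ℝ) :
    BddAbove ((fun α => lineval α b) '' Λ) := by
  refine ⟨∑ s, |b s| * (max |G.Lval| |G.Uval|), ?_⟩
  rintro x ⟨α, hα, rfl⟩
  exact lineval_abs_le_of_box hΛ hα b

lemma VLam_ge (hΛ : Λ ⊆ G.box) (hα : α ∈ Λ) (b : S → ℝ) :
    lineval α b ≤ VLam Λ b :=
  le_csSup (VLam_bddAbove hΛ b) ⟨α, hα, rfl⟩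

lemma VLam_attained (hne : Λ.Nonempty) (hcomp : IsCompact Λ) (hΛ : Λ ⊆ G.box) (b : S → ℝ) :
    ∃ α ∈ Λ, VLam Λ b = lineval α b := by
  obtain ⟨α, hα, hmax'⟩ := hcomp.exists_isMaxOn hne (lineval_continuous b).continuousOn
  have hmax : ∀ β ∈ Λ, lineval β b ≤ lineval α b := fun β hβ => hmax' hβ
  refine ⟨α, hα, ?_⟩
  apply le_antisymm
  · apply csSup_le (hne.image _)
    rintro x ⟨β, hβ, rfl⟩
    exact hmax β hβ
  · exact VLam_ge hΛ hα b

lemma VLam_le_Uval (hne : Λ.Nonempty) (hcomp : IsCompact Λ) (hΛ : Λ ⊆ G.box)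
    (hb : b ∈ stdSimplex ℝ S) : VLam Λ b ≤ G.Uval := by
  obtain ⟨α, hα, h⟩ := VLam_attained hne hcomp hΛ b
  rw [h]; exact lineval_le_of_box hΛ hα hb

lemma Lval_le_VLam (hne : Λ.Nonempty) (hΛ : Λ ⊆ G.box)
    (hb : b ∈ stdSimplex ℝ S) : G.Lval ≤ VLam Λ b := by
  obtain ⟨α, hα⟩ := hne
  exact le_trans (le_lineval_of_box hΛ hα hb) (VLam_ge hΛ hα b)

lemma lineval_lip (hΛ : Λ ⊆ G.box) (hα : α ∈ Λ) (hp : p ∈ stdSimplex ℝ S)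
    (hq : q ∈ stdSimplex ℝ S) :
    lineval α p - lineval α q ≤ G.δval * l1dist p q := by
  have key : lineval α p - lineval α q
      = ∑ s, (p s - q s) * (α s - (G.Lval + G.Uval) / 2) := by
    rw [lineval, lineval]
    rw [← Finset.sum_sub_distrib]
    have : ∑ s, (p s - q s) * ((G.Lval + G.Uval) / 2) = 0 := by
      rw [← Finset.sum_mul, Finset.sum_sub_distrib, hp.2, hq.2, sub_self, zero_mul]
    calc ∑ s, (p s * α s - q s * α s) = ∑ s, (p s - q s) * α s := by
          refine Finset.sum_congr rfl fun s _ => by ring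
    _ = ∑ s, (p s - q s) * (α s - (G.Lval + G.Uval) / 2)
        + ∑ s, (p s - q s) * ((G.Lval + G.Uval) / 2) := by
          rw [← Finset.sum_add_distrib]
          refine Finset.sum_congr rfl fun s _ => by ring
    _ = ∑ s, (p s - q s) * (α s - (G.Lval + G.Uval) / 2) := by rw [this, add_zero]
  rw [key, l1dist, Finset.mul_sum]
  refine Finset.sum_le_sum fun s _ => ?_
  calc (p s - q s) * (α s - (G.Lval + G.Uval) / 2)
      ≤ |(p s - q s) * (α s - (G.Lval + G.Uval) / 2)| := le_abs_self _
  _ = |p s - q s| * |α s - (G.Lval + G.Uval) / 2| := abs_mul _ _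
  _ ≤ |p s - q s| * G.δval := by
      refine mul_le_mul_of_nonneg_left ?_ (abs_nonneg _)
      rw [abs_le]
      have h1 := ((hΛ hα) s).1
      have h2 := ((hΛ hα) s).2
      constructor <;> [skip; skip] <;> rw [δval] <;> [linarith; linarith]
  _ = G.δval * |p s - q s| := mul_comm _ _

lemma VLam_lip (hne : Λ.Nonempty) (hcomp : IsCompact Λ) (hΛ : Λ ⊆ G.box)
    (hp : p ∈ stdSimplex ℝ S) (hq : q ∈ stdSimplex ℝ S) :
    |VLam Λ p - VLam Λ q| ≤ G.δval * l1dist p q := by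
  rw [abs_sub_le_iff]
  constructor
  · obtain ⟨α, hα, h⟩ := VLam_attained hne hcomp hΛ p
    rw [h]
    have := lineval_lip hΛ hα hp hq
    have h2 := VLam_ge hΛ hα q
    linarith
  · obtain ⟨α, hα, h⟩ := VLam_attained hne hcomp hΛ q
    rw [h]
    have key : lineval α q - lineval α p ≤ G.δval * l1dist q p := lineval_lip hΛ hα hq hp
    have h2 := VLam_ge hΛ hα p
    have : l1dist q p = l1dist p q := by
      rw [l1dist, l1dist]
      exact Finset.sum_congr rfl fun s _ => abs_sub_comm _ _
    linarith [key, this ▸ key]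

lemma lineval_comb (α : S → ℝ) (x y : S → ℝ) (a c : ℝ) :
    lineval α (a • x + c • y) = a * lineval α x + c * lineval α y := by
  simp only [lineval, Pi.add_apply, Pi.smul_apply, smul_eq_mul, Finset.mul_sum]
  rw [← Finset.sum_add_distrib]
  exact Finset.sum_congr rfl fun s _ => by ring

lemma lineval_comb' (β₁ β₂ b : S → ℝ) (a c : ℝ) :
    lineval (a • β₁ + c • β₂) b = a * lineval β₁ b + c * lineval β₂ b := by
  simp only [lineval, Pi.add_apply, Pi.smul_apply, smul_eq_mul, Finset.mul_sum]
  rw [← Finset.sum_add_distrib]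
  exact Finset.sum_congr rfl fun s _ => by ring

lemma VLam_convex (hne : Λ.Nonempty) (hcomp : IsCompact Λ) (hΛ : Λ ⊆ G.box)
    {x y : S → ℝ} {a c : ℝ} (ha : 0 ≤ a) (hc : 0 ≤ c) :
    VLam Λ (a • x + c • y) ≤ a * VLam Λ x + c * VLam Λ y := by
  obtain ⟨α, hα, h⟩ := VLam_attained hne hcomp hΛ (a • x + c • y)
  rw [h, lineval_comb]
  have h1 := VLam_ge hΛ hα x
  have h2 := VLam_ge hΛ hα y
  have := mul_le_mul_of_nonneg_left h1 ha
  have := mul_le_mul_of_nonneg_left h2 hc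
  linarith

end VLamLemmas

end OSPOSG

section SumReorder

variable {β1 β2 β3 β4 β5 : Type*} [Fintype β1] [Fintype β2] [Fintype β3] [Fintype β4] [Fintype β5]

lemma sum4_reorder (Y : β1 → β2 → β3 → β4 → ℝ) :
    ∑ o, ∑ s', ∑ s, ∑ a2, Y o s' s a2 = ∑ s, ∑ a2, ∑ o, ∑ s', Y o s' s a2 := by
  calc ∑ o, ∑ s', ∑ s, ∑ a2, Y o s' s a2
      = ∑ o, ∑ s, ∑ s', ∑ a2, Y o s' s a2 :=
        Finset.sum_congr rfl fun o _ => Finset.sum_comm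
  _ = ∑ s, ∑ o, ∑ s', ∑ a2, Y o s' s a2 := Finset.sum_comm
  _ = ∑ s, ∑ o, ∑ a2, ∑ s', Y o s' s a2 :=
        Finset.sum_congr rfl fun s _ => Finset.sum_congr rfl fun o _ => Finset.sum_comm
  _ = ∑ s, ∑ a2, ∑ o, ∑ s', Y o s' s a2 :=
        Finset.sum_congr rfl fun s _ => Finset.sum_comm

lemma sum5_reorder (Y : β1 → β2 → β3 → β4 → β5 → ℝ) :
    ∑ s, ∑ a2, ∑ a1, ∑ o, ∑ s', Y s a2 a1 o s'
      = ∑ a1, ∑ o, ∑ s', ∑ s, ∑ a2, Y s a2 a1 o s' := by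
  calc ∑ s, ∑ a2, ∑ a1, ∑ o, ∑ s', Y s a2 a1 o s'
      = ∑ s, ∑ a1, ∑ a2, ∑ o, ∑ s', Y s a2 a1 o s' :=
        Finset.sum_congr rfl fun s _ => Finset.sum_comm
  _ = ∑ a1, ∑ s, ∑ a2, ∑ o, ∑ s', Y s a2 a1 o s' := Finset.sum_comm
  _ = ∑ a1, ∑ o, ∑ s', ∑ s, ∑ a2, Y s a2 a1 o s' :=
        Finset.sum_congr rfl fun a1 _ =>
          (sum4_reorder fun o s' s a2 => Y s a2 a1 o s').symm

end SumReorder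

namespace OSPOSG

variable {S A1 A2 O : Type*} [Fintype S] [Fintype A1] [Fintype A2] [Fintype O]
  [Nonempty S] [Nonempty A1] [Nonempty A2] [Nonempty O]

/-- inner stage payoff given continuation vectors -/
def phiF (G : OSPOSG S A1 A2 O) (π1 : A1 → ℝ) (αb : A1 → O → S → ℝ) (s : S) (a2 : A2) : ℝ :=
  ∑ a1, π1 a1 * (G.R s a1 a2 + G.γ * ∑ o, ∑ s', G.T s a1 a2 o s' * αb a1 o s')

lemma valcompVert_eq (G : OSPOSG S A1 A2 O) (π1 : A1 → ℝ) (αb : A1 → O → S → ℝ) (s : S) :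
    G.valcompVert π1 αb s = Finset.univ.inf' Finset.univ_nonempty (G.phiF π1 αb s) := rfl

/-- the reward part of the stage utility -/
def rewardT (G : OSPOSG S A1 A2 O) (b : S → ℝ) (π1 : A1 → ℝ) (π2 : S → A2 → ℝ) : ℝ :=
  ∑ s, ∑ a1, ∑ a2, b s * π1 a1 * π2 s a2 * G.R s a1 a2

/-- the bilinear payoff used in the minimax argument -/
def PhiFun (G : OSPOSG S A1 A2 O) (b : S → ℝ) (π1 : A1 → ℝ) (π2 : S → A2 → ℝ)
    (αb : A1 → O → S → ℝ) : ℝ :=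
  ∑ s, ∑ a2, b s * π2 s a2 * G.phiF π1 αb s a2

section StageAlgebra

variable {G : OSPOSG S A1 A2 O} {b : S → ℝ} {π1 : A1 → ℝ} {π2 : S → A2 → ℝ}
  {Λ : Set (S → ℝ)}

lemma Pr_nonneg (hb : b ∈ stdSimplex ℝ S) (hπ1 : π1 ∈ stdSimplex ℝ A1) (hπ2 : π2 ∈ Pi2 S A2)
    (a1 : A1) (o : O) : 0 ≤ G.Pr b π1 π2 a1 o := by
  rw [Pr_eq]; exact mul_nonneg (hπ1.1 a1) (Dn_nonneg hb hπ2 a1 o)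

lemma Dn_sum_o (hb : b ∈ stdSimplex ℝ S) (hπ2 : π2 ∈ Pi2 S A2) (a1 : A1) :
    ∑ o, G.Dn b π2 a1 o = 1 := by
  have : ∑ o, G.Dn b π2 a1 o
      = ∑ s, ∑ a2, ∑ o, ∑ s', b s * π2 s a2 * G.T s a1 a2 o s' := by
    simp only [Dn, numf]
    exact sum4_reorder fun o s' s a2 => b s * π2 s a2 * G.T s a1 a2 o s'
  rw [this]
  have h1 : ∀ s, ∑ a2, ∑ o, ∑ s', b s * π2 s a2 * G.T s a1 a2 o s' = b s := by
    intro s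
    have h2 : ∀ a2, ∑ o, ∑ s', b s * π2 s a2 * G.T s a1 a2 o s'
        = b s * π2 s a2 := by
      intro a2
      simp only [← Finset.mul_sum]
      rw [G.T_sum s a1 a2, mul_one]
    rw [Finset.sum_congr rfl fun a2 _ => h2 a2, ← Finset.mul_sum, (hπ2 s).2, mul_one]
  rw [Finset.sum_congr rfl fun s _ => h1 s, hb.2]

lemma sum_Pr_one (hb : b ∈ stdSimplex ℝ S) (hπ1 : π1 ∈ stdSimplex ℝ A1)
    (hπ2 : π2 ∈ Pi2 S A2) : ∑ a1, ∑ o, G.Pr b π1 π2 a1 o = 1 := by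
  have : ∀ a1, ∑ o, G.Pr b π1 π2 a1 o = π1 a1 := by
    intro a1
    simp only [Pr_eq, ← Finset.mul_sum]
    rw [Dn_sum_o hb hπ2 a1, mul_one]
  rw [Finset.sum_congr rfl fun a1 _ => this a1, hπ1.2]

lemma key_pointwise (hb : b ∈ stdSimplex ℝ S) (hπ1 : π1 ∈ stdSimplex ℝ A1)
    (hπ2 : π2 ∈ Pi2 S A2) (hne : Λ.Nonempty) (hcomp : IsCompact Λ) (hbox : Λ ⊆ G.box)
    (a1 : A1) (o : O) :
    (∀ β ∈ Λ, π1 a1 * ∑ s', G.numf b π2 a1 o s' * β s'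
        ≤ G.Pr b π1 π2 a1 o * VLam Λ (G.beliefUpd b a1 π2 o)) ∧
    (∃ α ∈ Λ, G.Pr b π1 π2 a1 o * VLam Λ (G.beliefUpd b a1 π2 o)
        = π1 a1 * ∑ s', G.numf b π2 a1 o s' * α s') := by
  by_cases hπ0 : π1 a1 = 0
  · constructor
    · intro β hβ
      rw [Pr_eq, hπ0, zero_mul, zero_mul, zero_mul]
    · obtain ⟨α, hα⟩ := hne
      exact ⟨α, hα, by rw [Pr_eq, hπ0, zero_mul, zero_mul, zero_mul]⟩
  by_cases hD : G.Dn b π2 a1 o = 0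
  · have hnum := (Dn_eq_zero_iff hb hπ2).1 hD
    have hz : ∀ β : S → ℝ, (∑ s', G.numf b π2 a1 o s' * β s') = 0 := fun β =>
      Finset.sum_eq_zero fun s' _ => by rw [hnum s', zero_mul]
    constructor
    · intro β hβ
      rw [Pr_eq, hD, mul_zero, zero_mul, hz β, mul_zero]
    · obtain ⟨α, hα⟩ := hne
      exact ⟨α, hα, by rw [Pr_eq, hD, mul_zero, zero_mul, hz α, mul_zero]⟩
  · have hupd := upd_mem_simplex hb hπ2 hD
    have hPr0 : 0 ≤ G.Pr b π1 π2 a1 o := Pr_nonneg hb hπ1 hπ2 a1 o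
    have heval : ∀ β : S → ℝ,
        G.Pr b π1 π2 a1 o * lineval β (G.beliefUpd b a1 π2 o)
          = π1 a1 * ∑ s', G.numf b π2 a1 o s' * β s' := by
      intro β
      rw [Pr_eq, lineval, beliefUpd_eq, Finset.mul_sum, Finset.mul_sum]
      refine Finset.sum_congr rfl fun s' _ => ?_
      simp only
      field_simp
    constructor
    · intro β hβ
      rw [← heval β]
      exact mul_le_mul_of_nonneg_left (VLam_ge hbox hβ _) hPr0
    · obtain ⟨α, hα, hval⟩ := VLam_attained hne hcomp hbox (G.beliefUpd b a1 π2 o)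
      exact ⟨α, hα, by rw [hval, heval α]⟩

lemma Phi_expand (αb : A1 → O → S → ℝ) :
    G.PhiFun b π1 π2 αb = G.rewardT b π1 π2
      + G.γ * ∑ a1, ∑ o, π1 a1 * ∑ s', G.numf b π2 a1 o s' * αb a1 o s' := by
  have hsplit : G.PhiFun b π1 π2 αb
      = (∑ s, ∑ a2, ∑ a1, b s * π2 s a2 * (π1 a1 * G.R s a1 a2))
        + ∑ s, ∑ a2, ∑ a1,
            b s * π2 s a2 * π1 a1 * G.γ * ∑ o, ∑ s', G.T s a1 a2 o s' * αb a1 o s' := by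
    rw [PhiFun, ← Finset.sum_add_distrib]
    refine Finset.sum_congr rfl fun s _ => ?_
    rw [← Finset.sum_add_distrib]
    refine Finset.sum_congr rfl fun a2 _ => ?_
    rw [phiF, Finset.mul_sum, ← Finset.sum_add_distrib]
    refine Finset.sum_congr rfl fun a1 _ => by ring
  rw [hsplit]
  congr 1
  · rw [rewardT]
    refine Finset.sum_congr rfl fun s _ => ?_
    rw [Finset.sum_comm]
    exact Finset.sum_congr rfl fun a1 _ => Finset.sum_congr rfl fun a2 _ => by ring
  · -- second summand
    have hL : (∑ s, ∑ a2, ∑ a1,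
          b s * π2 s a2 * π1 a1 * G.γ * ∑ o, ∑ s', G.T s a1 a2 o s' * αb a1 o s')
        = ∑ s, ∑ a2, ∑ a1, ∑ o, ∑ s',
            G.γ * (π1 a1 * (b s * π2 s a2 * (G.T s a1 a2 o s' * αb a1 o s'))) := by
      simp only [Finset.mul_sum]
      refine Finset.sum_congr rfl fun s _ => Finset.sum_congr rfl fun a2 _ =>
        Finset.sum_congr rfl fun a1 _ => Finset.sum_congr rfl fun o _ =>
        Finset.sum_congr rfl fun s' _ => by ring
    have hR : G.γ * (∑ a1, ∑ o, π1 a1 * ∑ s', G.numf b π2 a1 o s' * αb a1 o s')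
        = ∑ a1, ∑ o, ∑ s', ∑ s, ∑ a2,
            G.γ * (π1 a1 * (b s * π2 s a2 * (G.T s a1 a2 o s' * αb a1 o s'))) := by
      simp only [numf, Finset.mul_sum, Finset.sum_mul]
      refine Finset.sum_congr rfl fun a1 _ => Finset.sum_congr rfl fun o _ =>
        Finset.sum_congr rfl fun s' _ => Finset.sum_congr rfl fun s _ =>
        Finset.sum_congr rfl fun a2 _ => by ring
    rw [hL, hR]
    exact sum5_reorder fun s a2 a1 o s' =>
      G.γ * (π1 a1 * (b s * π2 s a2 * (G.T s a1 a2 o s' * αb a1 o s')))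

end StageAlgebra

end OSPOSG

namespace OSPOSG

variable {S A1 A2 O : Type*} [Fintype S] [Fintype A1] [Fintype A2] [Fintype O]
  [Nonempty S] [Nonempty A1] [Nonempty A2] [Nonempty O]

section StageMore

variable {G : OSPOSG S A1 A2 O} {b : S → ℝ} {π1 : A1 → ℝ} {π2 : S → A2 → ℝ}
  {Λ : Set (S → ℝ)} {V W : (S → ℝ) → ℝ} {lo hi loV hiV loW hiW M : ℝ}

lemma stageU_decomp (V : (S → ℝ) → ℝ) :
    G.stageU V b π1 π2 = G.rewardT b π1 π2
      + G.γ * ∑ a1, ∑ o, G.Pr b π1 π2 a1 o * V (G.beliefUpd b a1 π2 o) := rfl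

lemma stageU_eq_attained (hb : b ∈ stdSimplex ℝ S) (hπ1 : π1 ∈ stdSimplex ℝ A1)
    (hπ2 : π2 ∈ Pi2 S A2) (hne : Λ.Nonempty) (hcomp : IsCompact Λ) (hbox : Λ ⊆ G.box) :
    ∃ αb : A1 → O → S → ℝ, (∀ a1 o, αb a1 o ∈ Λ) ∧
      G.stageU (VLam Λ) b π1 π2 = G.PhiFun b π1 π2 αb ∧
      (∀ αb' : A1 → O → S → ℝ, (∀ a1 o, αb' a1 o ∈ Λ) →
        G.PhiFun b π1 π2 αb' ≤ G.stageU (VLam Λ) b π1 π2) := by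
  have h := fun a1 o => key_pointwise hb hπ1 hπ2 hne hcomp hbox a1 o
  choose αb hmem heq using fun a1 o => (h a1 o).2
  refine ⟨αb, hmem, ?_, ?_⟩
  · rw [stageU_decomp, Phi_expand]
    congr 1
    congr 1
    exact Finset.sum_congr rfl fun a1 _ => Finset.sum_congr rfl fun o _ => heq a1 o
  · intro αb' hmem'
    rw [stageU_decomp, Phi_expand]
    refine add_le_add (le_refl _) (mul_le_mul_of_nonneg_left ?_ gamma_nonneg)
    exact Finset.sum_le_sum fun a1 _ => Finset.sum_le_sum fun o _ =>
      (h a1 o).1 (αb' a1 o) (hmem' a1 o)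

lemma PhiFun_rows (αb : A1 → O → S → ℝ) :
    G.PhiFun b π1 π2 αb = ∑ s, b s * ∑ a2, π2 s a2 * G.phiF π1 αb s a2 := by
  rw [PhiFun]
  refine Finset.sum_congr rfl fun s _ => ?_
  rw [Finset.mul_sum]
  exact Finset.sum_congr rfl fun a2 _ => by ring

lemma valcomp_le_PhiFun (hb : b ∈ stdSimplex ℝ S) (hπ2 : π2 ∈ Pi2 S A2)
    (αb : A1 → O → S → ℝ) : G.valcomp π1 αb b ≤ G.PhiFun b π1 π2 αb := by
  rw [valcomp, PhiFun_rows]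
  refine Finset.sum_le_sum fun s _ => mul_le_mul_of_nonneg_left ?_ (hb.1 s)
  have hinf : ∀ a2, G.valcompVert π1 αb s ≤ G.phiF π1 αb s a2 := fun a2 => by
    rw [valcompVert_eq]; exact Finset.inf'_le _ (Finset.mem_univ a2)
  calc G.valcompVert π1 αb s = ∑ a2, π2 s a2 * G.valcompVert π1 αb s := by
        rw [← Finset.sum_mul, (hπ2 s).2, one_mul]
  _ ≤ ∑ a2, π2 s a2 * G.phiF π1 αb s a2 :=
      Finset.sum_le_sum fun a2 _ => mul_le_mul_of_nonneg_left (hinf a2) ((hπ2 s).1 a2)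

lemma exists_pi2_PhiFun_eq (αb : A1 → O → S → ℝ) :
    ∃ π2' ∈ Pi2 S A2, G.PhiFun b π1 π2' αb = G.valcomp π1 αb b := by
  classical
  have h := fun s => Finset.exists_mem_eq_inf' (Finset.univ_nonempty (α := A2)) (G.phiF π1 αb s)
  choose χ hχmem hχval using h
  refine ⟨fun s a2 => if a2 = χ s then 1 else 0, ?_, ?_⟩
  · intro s
    constructor
    · intro a2; dsimp only; split <;> norm_num
    · rw [Finset.sum_ite_eq' Finset.univ (χ s) fun _ => (1:ℝ)]
      simp
  · rw [PhiFun_rows, valcomp]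
    refine Finset.sum_congr rfl fun s _ => ?_
    congr 1
    have : ∀ a2, (if a2 = χ s then (1:ℝ) else 0) * G.phiF π1 αb s a2
        = if a2 = χ s then G.phiF π1 αb s a2 else 0 := by
      intro a2; split <;> simp
    rw [Finset.sum_congr rfl fun a2 _ => this a2,
      Finset.sum_ite_eq' Finset.univ (χ s) (G.phiF π1 αb s)]
    simp only [Finset.mem_univ, if_true]
    rw [valcompVert_eq, hχval s]

lemma weights_sum_one (hb : b ∈ stdSimplex ℝ S) (hπ1 : π1 ∈ stdSimplex ℝ A1)
    (hπ2 : π2 ∈ Pi2 S A2) :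
    ∑ s, ∑ a1, ∑ a2, b s * π1 a1 * π2 s a2 = 1 := by
  have h1 : ∀ s, ∑ a1, ∑ a2, b s * π1 a1 * π2 s a2 = b s := by
    intro s
    have h2 : ∀ a1, ∑ a2, b s * π1 a1 * π2 s a2 = b s * π1 a1 := by
      intro a1
      rw [← Finset.mul_sum, (hπ2 s).2, mul_one]
    rw [Finset.sum_congr rfl fun a1 _ => h2 a1, ← Finset.mul_sum, hπ1.2, mul_one]
  rw [Finset.sum_congr rfl fun s _ => h1 s, hb.2]

lemma rewardT_bounds (hb : b ∈ stdSimplex ℝ S) (hπ1 : π1 ∈ stdSimplex ℝ A1)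
    (hπ2 : π2 ∈ Pi2 S A2) :
    G.rmin ≤ G.rewardT b π1 π2 ∧ G.rewardT b π1 π2 ≤ G.rmax := by
  have hw : ∀ s a1 a2, 0 ≤ b s * π1 a1 * π2 s a2 := fun s a1 a2 =>
    mul_nonneg (mul_nonneg (hb.1 s) (hπ1.1 a1)) ((hπ2 s).1 a2)
  have hconst : ∀ c : ℝ, ∑ s, ∑ a1, ∑ a2, b s * π1 a1 * π2 s a2 * c = c := by
    intro c
    simp only [← Finset.sum_mul]
    rw [weights_sum_one hb hπ1 hπ2, one_mul]
  constructor
  · calc G.rmin = ∑ s, ∑ a1, ∑ a2, b s * π1 a1 * π2 s a2 * G.rmin := (hconst _).symm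
    _ ≤ G.rewardT b π1 π2 := by
        rw [rewardT]
        refine Finset.sum_le_sum fun s _ => Finset.sum_le_sum fun a1 _ =>
          Finset.sum_le_sum fun a2 _ =>
          mul_le_mul_of_nonneg_left (rmin_le_R s a1 a2) (hw s a1 a2)
  · calc G.rewardT b π1 π2
        ≤ ∑ s, ∑ a1, ∑ a2, b s * π1 a1 * π2 s a2 * G.rmax := by
          rw [rewardT]
          refine Finset.sum_le_sum fun s _ => Finset.sum_le_sum fun a1 _ =>
            Finset.sum_le_sum fun a2 _ =>
            mul_le_mul_of_nonneg_left (R_le_rmax s a1 a2) (hw s a1 a2)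
    _ = G.rmax := hconst _

lemma contT_term_le (hb : b ∈ stdSimplex ℝ S) (hπ1 : π1 ∈ stdSimplex ℝ A1)
    (hπ2 : π2 ∈ Pi2 S A2) (a1 : A1) (o : O)
    (hVW : ∀ p ∈ stdSimplex ℝ S, V p ≤ W p + M) :
    G.Pr b π1 π2 a1 o * V (G.beliefUpd b a1 π2 o)
      ≤ G.Pr b π1 π2 a1 o * W (G.beliefUpd b a1 π2 o) + G.Pr b π1 π2 a1 o * M := by
  by_cases hD : G.Dn b π2 a1 o = 0
  · rw [Pr_eq, hD, mul_zero, zero_mul, zero_mul, zero_mul, add_zero]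
  · have hupd := upd_mem_simplex hb hπ2 hD
    rw [← mul_add]
    exact mul_le_mul_of_nonneg_left (hVW _ hupd) (Pr_nonneg hb hπ1 hπ2 a1 o)

lemma stageU_le_add (hb : b ∈ stdSimplex ℝ S) (hπ1 : π1 ∈ stdSimplex ℝ A1)
    (hπ2 : π2 ∈ Pi2 S A2) (hVW : ∀ p ∈ stdSimplex ℝ S, V p ≤ W p + M) :
    G.stageU V b π1 π2 ≤ G.stageU W b π1 π2 + G.γ * M := by
  rw [stageU_decomp, stageU_decomp]
  have hcont : ∑ a1, ∑ o, G.Pr b π1 π2 a1 o * V (G.beliefUpd b a1 π2 o)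
      ≤ (∑ a1, ∑ o, G.Pr b π1 π2 a1 o * W (G.beliefUpd b a1 π2 o)) + M := by
    calc ∑ a1, ∑ o, G.Pr b π1 π2 a1 o * V (G.beliefUpd b a1 π2 o)
        ≤ ∑ a1, ∑ o, (G.Pr b π1 π2 a1 o * W (G.beliefUpd b a1 π2 o)
            + G.Pr b π1 π2 a1 o * M) :=
          Finset.sum_le_sum fun a1 _ => Finset.sum_le_sum fun o _ =>
            contT_term_le hb hπ1 hπ2 a1 o hVW
    _ = (∑ a1, ∑ o, G.Pr b π1 π2 a1 o * W (G.beliefUpd b a1 π2 o))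
          + ∑ a1, ∑ o, G.Pr b π1 π2 a1 o * M := by
          simp only [Finset.sum_add_distrib]
    _ = (∑ a1, ∑ o, G.Pr b π1 π2 a1 o * W (G.beliefUpd b a1 π2 o)) + M := by
          congr 1
          simp only [← Finset.sum_mul]
          rw [sum_Pr_one hb hπ1 hπ2, one_mul]
  have := mul_le_mul_of_nonneg_left hcont (gamma_nonneg (G := G))
  rw [mul_add] at this
  linarith

lemma stageU_bounds (hb : b ∈ stdSimplex ℝ S) (hπ1 : π1 ∈ stdSimplex ℝ A1)
    (hπ2 : π2 ∈ Pi2 S A2) (hV : ∀ p ∈ stdSimplex ℝ S, lo ≤ V p ∧ V p ≤ hi) :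
    G.rmin + G.γ * lo ≤ G.stageU V b π1 π2 ∧ G.stageU V b π1 π2 ≤ G.rmax + G.γ * hi := by
  have hcont_le : ∀ a1 o, G.Pr b π1 π2 a1 o * V (G.beliefUpd b a1 π2 o)
      ≤ G.Pr b π1 π2 a1 o * hi := by
    intro a1 o
    by_cases hD : G.Dn b π2 a1 o = 0
    · rw [Pr_eq, hD, mul_zero, zero_mul, zero_mul]
    · exact mul_le_mul_of_nonneg_left ((hV _ (upd_mem_simplex hb hπ2 hD)).2)
        (Pr_nonneg hb hπ1 hπ2 a1 o)
  have hcont_ge : ∀ a1 o, G.Pr b π1 π2 a1 o * lo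
      ≤ G.Pr b π1 π2 a1 o * V (G.beliefUpd b a1 π2 o) := by
    intro a1 o
    by_cases hD : G.Dn b π2 a1 o = 0
    · rw [Pr_eq, hD, mul_zero, zero_mul, zero_mul]
    · exact mul_le_mul_of_nonneg_left ((hV _ (upd_mem_simplex hb hπ2 hD)).1)
        (Pr_nonneg hb hπ1 hπ2 a1 o)
  have hsumhi : ∑ a1, ∑ o, G.Pr b π1 π2 a1 o * hi = hi := by
    simp only [← Finset.sum_mul]; rw [sum_Pr_one hb hπ1 hπ2, one_mul]
  have hsumlo : ∑ a1, ∑ o, G.Pr b π1 π2 a1 o * lo = lo := by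
    simp only [← Finset.sum_mul]; rw [sum_Pr_one hb hπ1 hπ2, one_mul]
  have h1 : ∑ a1, ∑ o, G.Pr b π1 π2 a1 o * V (G.beliefUpd b a1 π2 o) ≤ hi := by
    rw [← hsumhi]
    exact Finset.sum_le_sum fun a1 _ => Finset.sum_le_sum fun o _ => hcont_le a1 o
  have h2 : lo ≤ ∑ a1, ∑ o, G.Pr b π1 π2 a1 o * V (G.beliefUpd b a1 π2 o) := by
    rw [← hsumlo]
    exact Finset.sum_le_sum fun a1 _ => Finset.sum_le_sum fun o _ => hcont_ge a1 o
  have hr := rewardT_bounds (G := G) (O := O) hb hπ1 hπ2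
  rw [stageU_decomp]
  constructor
  · have := mul_le_mul_of_nonneg_left h2 (gamma_nonneg (G := G))
    linarith [hr.1]
  · have := mul_le_mul_of_nonneg_left h1 (gamma_nonneg (G := G))
    linarith [hr.2]

end StageMore

section HopPlumbing

variable {G : OSPOSG S A1 A2 O} {b : S → ℝ} {π1 : A1 → ℝ} {V W : (S → ℝ) → ℝ}
  {lo hi loV hiV loW hiW M : ℝ}

lemma stdSimplex_ne (ι : Type*) [Fintype ι] [Nonempty ι] : (stdSimplex ℝ ι).Nonempty := by
  classical
  exact ⟨_, ite_eq_mem_stdSimplex ℝ (Classical.arbitrary ι)⟩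

lemma Pi2_ne : (Pi2 S A2).Nonempty := by
  obtain ⟨π, hπ⟩ := stdSimplex_ne A2
  exact ⟨fun _ => π, fun s => hπ⟩

instance : Nonempty ↥(stdSimplex ℝ A1) := (stdSimplex_ne A1).to_subtype

instance : Nonempty ↥(Pi2 S A2) := Pi2_ne.to_subtype

lemma iInf_bddBelow (hb : b ∈ stdSimplex ℝ S) (hπ1 : π1 ∈ stdSimplex ℝ A1)
    (hV : ∀ p ∈ stdSimplex ℝ S, lo ≤ V p ∧ V p ≤ hi) :
    BddBelow (Set.range fun π2 : ↥(Pi2 S A2) => G.stageU V b π1 π2.1) := by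
  refine ⟨G.rmin + G.γ * lo, ?_⟩
  rintro x ⟨π2, rfl⟩
  exact (stageU_bounds hb hπ1 π2.2 hV).1

lemma iSup_bddAbove (hb : b ∈ stdSimplex ℝ S)
    (hV : ∀ p ∈ stdSimplex ℝ S, lo ≤ V p ∧ V p ≤ hi) :
    BddAbove (Set.range fun π1 : ↥(stdSimplex ℝ A1) =>
      ⨅ π2 : ↥(Pi2 S A2), G.stageU V b π1.1 π2.1) := by
  refine ⟨G.rmax + G.γ * hi, ?_⟩
  rintro x ⟨π1, rfl⟩
  obtain ⟨π2, hπ2⟩ := Pi2_ne (S := S) (A2 := A2)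
  exact le_trans (ciInf_le (iInf_bddBelow hb π1.2 hV) ⟨π2, hπ2⟩)
    (stageU_bounds hb π1.2 hπ2 hV).2

lemma Hop_bounds (hb : b ∈ stdSimplex ℝ S)
    (hV : ∀ p ∈ stdSimplex ℝ S, G.Lval ≤ V p ∧ V p ≤ G.Uval) :
    G.Lval ≤ G.Hop V b ∧ G.Hop V b ≤ G.Uval := by
  rw [Hop]
  constructor
  · obtain ⟨π1, hπ1⟩ := stdSimplex_ne A1
    refine le_trans ?_ (le_ciSup (iSup_bddAbove hb hV) ⟨π1, hπ1⟩)
    refine le_trans (le_of_eq (Lval_fix (G := G)).symm) (le_ciInf fun π2 => ?_)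
    exact (stageU_bounds hb hπ1 π2.2 hV).1
  · refine ciSup_le fun π1 => ?_
    obtain ⟨π2, hπ2⟩ := Pi2_ne (S := S) (A2 := A2)
    refine le_trans (ciInf_le (iInf_bddBelow hb π1.2 hV) ⟨π2, hπ2⟩) ?_
    exact le_trans (stageU_bounds hb π1.2 hπ2 hV).2 (le_of_eq (Uval_fix (G := G)))

lemma Hop_le_add (hb : b ∈ stdSimplex ℝ S)
    (hV : ∀ p ∈ stdSimplex ℝ S, loV ≤ V p ∧ V p ≤ hiV)
    (hW : ∀ p ∈ stdSimplex ℝ S, loW ≤ W p ∧ W p ≤ hiW)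
    (hVW : ∀ p ∈ stdSimplex ℝ S, V p ≤ W p + M) :
    G.Hop V b ≤ G.Hop W b + G.γ * M := by
  rw [Hop, Hop]
  refine ciSup_le fun π1 => ?_
  have h2 : (⨅ π2 : ↥(Pi2 S A2), G.stageU V b π1.1 π2.1) - G.γ * M
      ≤ ⨅ π2 : ↥(Pi2 S A2), G.stageU W b π1.1 π2.1 := by
    refine le_ciInf fun π2 => ?_
    have h1 : (⨅ π2' : ↥(Pi2 S A2), G.stageU V b π1.1 π2'.1) ≤ G.stageU V b π1.1 π2.1 :=
      ciInf_le (iInf_bddBelow hb π1.2 hV) π2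
    have h3 := stageU_le_add (G := G) hb π1.2 π2.2 hVW
    linarith
  have h4 : (⨅ π2 : ↥(Pi2 S A2), G.stageU W b π1.1 π2.1)
      ≤ ⨆ π1' : ↥(stdSimplex ℝ A1), ⨅ π2 : ↥(Pi2 S A2), G.stageU W b π1'.1 π2.1 :=
    le_ciSup (iSup_bddAbove hb hW) π1
  linarith

lemma Hop_abs_le (hb : b ∈ stdSimplex ℝ S)
    (hV : ∀ p ∈ stdSimplex ℝ S, loV ≤ V p ∧ V p ≤ hiV)
    (hW : ∀ p ∈ stdSimplex ℝ S, loW ≤ W p ∧ W p ≤ hiW)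
    (hM : ∀ p ∈ stdSimplex ℝ S, |V p - W p| ≤ M) :
    |G.Hop V b - G.Hop W b| ≤ G.γ * M := by
  rw [abs_sub_le_iff]
  constructor
  · have := Hop_le_add (G := G) hb hV hW (fun p hp => by have := (abs_sub_le_iff.1 (hM p hp)).1; linarith)
    linarith
  · have := Hop_le_add (G := G) hb hW hV (fun p hp => by have := (abs_sub_le_iff.1 (hM p hp)).2; linarith)
    linarith

end HopPlumbing

end OSPOSG

namespace OSPOSG

variable {S A1 A2 O : Type*} [Fintype S] [Fintype A1] [Fintype A2] [Fintype O]
  [Nonempty S] [Nonempty A1] [Nonempty A2] [Nonempty O]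

/-- policies of the maximizing player in the dual game: per-(a1,o) α-vectors in Λ -/
def polSet (A1 O : Type*) (Λ : Set (S → ℝ)) : Set (A1 → O → S → ℝ) :=
  Set.pi Set.univ fun _ : A1 => Set.pi Set.univ fun _ : O => Λ

lemma mem_polSet {Λ : Set (S → ℝ)} {αb : A1 → O → S → ℝ} :
    αb ∈ polSet A1 O Λ ↔ ∀ a1 o, αb a1 o ∈ Λ := by
  simp [polSet, Set.mem_pi]

section MinimaxApp

variable {G : OSPOSG S A1 A2 O} {b : S → ℝ} {π1 : A1 → ℝ} {Λ : Set (S → ℝ)}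

lemma phiF_continuous (s : S) (a2 : A2) :
    Continuous fun αb : A1 → O → S → ℝ => G.phiF π1 αb s a2 := by
  refine continuous_finset_sum _ fun a1 _ => Continuous.mul continuous_const ?_
  refine Continuous.add continuous_const (Continuous.mul continuous_const ?_)
  refine continuous_finset_sum _ fun o _ => continuous_finset_sum _ fun s' _ => ?_
  exact Continuous.mul continuous_const
    ((continuous_apply s').comp ((continuous_apply o).comp (continuous_apply a1)))

lemma phiF_affine (s : S) (a2 : A2) (d₁ d₂ : A1 → O → S → ℝ) (a c : ℝ) (hac : a + c = 1) :
    G.phiF π1 (a • d₁ + c • d₂) s a2 = a * G.phiF π1 d₁ s a2 + c * G.phiF π1 d₂ s a2 := by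
  have hc : c = 1 - a := by linarith
  subst hc
  simp only [phiF]
  rw [Finset.mul_sum, Finset.mul_sum, ← Finset.sum_add_distrib]
  refine Finset.sum_congr rfl fun a1 _ => ?_
  have happ : ∀ (o : O) (s' : S), (a • d₁ + (1 - a) • d₂) a1 o s'
      = a * d₁ a1 o s' + (1 - a) * d₂ a1 o s' := by
    intro o s'; simp
  have hinner : ∑ o, ∑ s', G.T s a1 a2 o s' * ((a • d₁ + (1 - a) • d₂) a1 o s')
      = a * (∑ o, ∑ s', G.T s a1 a2 o s' * d₁ a1 o s')
        + (1 - a) * (∑ o, ∑ s', G.T s a1 a2 o s' * d₂ a1 o s') := by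
    rw [Finset.mul_sum, Finset.mul_sum, ← Finset.sum_add_distrib]
    refine Finset.sum_congr rfl fun o _ => ?_
    rw [Finset.mul_sum, Finset.mul_sum, ← Finset.sum_add_distrib]
    refine Finset.sum_congr rfl fun s' _ => ?_
    rw [happ o s']; ring
  rw [hinner]; ring

lemma PhiFun_prod_sum (π2 : S → A2 → ℝ) (αb : A1 → O → S → ℝ) :
    (∑ i : S × A2, π2 i.1 i.2 * (b i.1 * G.phiF π1 αb i.1 i.2)) = G.PhiFun b π1 π2 αb := by
  rw [PhiFun, Fintype.sum_prod_type]
  exact Finset.sum_congr rfl fun s _ => Finset.sum_congr rfl fun a2 _ => by ring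

lemma minimax_app (hb : b ∈ stdSimplex ℝ S) (hπ1 : π1 ∈ stdSimplex ℝ A1)
    (hconv : Convex ℝ Λ) (hcomp : IsCompact Λ) (hne : Λ.Nonempty) (hbox : Λ ⊆ G.box)
    (t : ℝ)
    (hcov : ∀ αb : A1 → O → S → ℝ, (∀ a1 o, αb a1 o ∈ Λ) → G.valcomp π1 αb b < t) :
    ∃ π2 ∈ Pi2 S A2, ∀ αb : A1 → O → S → ℝ, (∀ a1 o, αb a1 o ∈ Λ) →
      G.PhiFun b π1 π2 αb < t := by
  classical
  set C : Set (S × A2 → ℝ) := {c | ∀ s, (fun a2 => c (s, a2)) ∈ stdSimplex ℝ A2} with hC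
  set D : Set (A1 → O → S → ℝ) := polSet A1 O Λ with hD
  set g : S × A2 → (A1 → O → S → ℝ) → ℝ :=
    fun i αb => b i.1 * G.phiF π1 αb i.1 i.2 with hg
  have hCconv : Convex ℝ C := by
    intro c₁ h₁ c₂ h₂ a c ha hc hac
    intro s
    have := convex_stdSimplex ℝ A2 (h₁ s) (h₂ s) ha hc hac
    have heq : (fun a2 => (a • c₁ + c • c₂) (s, a2))
        = a • (fun a2 => c₁ (s, a2)) + c • fun a2 => c₂ (s, a2) := by
      funext a2; simp
    rw [heq]
    exact this
  have hCne : C.Nonempty := by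
    obtain ⟨π, hπ⟩ := stdSimplex_ne A2
    exact ⟨fun i => π i.2, fun s => hπ⟩
  have hDconv : Convex ℝ D :=
    convex_pi fun _ _ => convex_pi fun _ _ => hconv
  have hDcomp : IsCompact D :=
    isCompact_univ_pi fun _ => isCompact_univ_pi fun _ => hcomp
  have hgc : ∀ i : S × A2, Continuous (g i) := fun i =>
    continuous_const.mul (phiF_continuous i.1 i.2)
  have hga : ∀ (i : S × A2) (d₁ d₂ : A1 → O → S → ℝ) (a c : ℝ), a + c = 1 →
      g i (a • d₁ + c • d₂) = a * g i d₁ + c * g i d₂ := by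
    intro i d₁ d₂ a c hac
    simp only [hg]
    rw [phiF_affine i.1 i.2 d₁ d₂ a c hac]
    ring
  have hcov' : ∀ d ∈ D, ∃ c ∈ C, (∑ i, c i * g i d) < t := by
    intro αb hαb
    obtain ⟨π2', hπ2', heq⟩ := exists_pi2_PhiFun_eq (G := G) (b := b) (π1 := π1) αb
    refine ⟨fun i => π2' i.1 i.2, fun s => hπ2' s, ?_⟩
    rw [PhiFun_prod_sum π2' αb, heq]
    exact hcov αb (mem_polSet.1 hαb)
  obtain ⟨c, hcC, hlt⟩ := minimax_aux C D hCconv hCne hDconv hDcomp g hgc hga t hcov'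
  refine ⟨fun s a2 => c (s, a2), hcC, ?_⟩
  intro αb hαb
  have := hlt αb (mem_polSet.2 hαb)
  rwa [PhiFun_prod_sum (fun s a2 => c (s, a2)) αb] at this

end MinimaxApp

end OSPOSG

namespace OSPOSG

variable {S A1 A2 O : Type*} [Fintype S] [Fintype A1] [Fintype A2] [Fintype O]
  [Nonempty S] [Nonempty A1] [Nonempty A2] [Nonempty O]

/-- the set of value-composition vertex vectors -/
def vcSet (G : OSPOSG S A1 A2 O) (Λ : Set (S → ℝ)) : Set (S → ℝ) :=
  {v | ∃ π1 ∈ stdSimplex ℝ A1, ∃ αb ∈ polSet A1 O Λ, v = G.valcompVert π1 αb}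

/-- one step of the α-vector set iteration -/
def nextL (G : OSPOSG S A1 A2 O) (Λ : Set (S → ℝ)) : Set (S → ℝ) :=
  closure (convexHull ℝ (G.vcSet Λ))

section NextL

variable {G : OSPOSG S A1 A2 O} {Λ : Set (S → ℝ)} {b : S → ℝ} {π1 : A1 → ℝ}

lemma box_eq : G.box = Set.pi Set.univ fun _ : S => Set.Icc G.Lval G.Uval := by
  ext α
  constructor
  · intro h s _
    exact h s
  · intro h s
    exact h s (Set.mem_univ s)

lemma box_convex : Convex ℝ (G.box) := by
  rw [box_eq]; exact convex_pi fun _ _ => convex_Icc _ _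

lemma box_closed : IsClosed (G.box) := by
  rw [box_eq]; exact isClosed_set_pi fun _ _ => isClosed_Icc

lemma box_compact : IsCompact (G.box) := by
  rw [box_eq]; exact isCompact_univ_pi fun _ => isCompact_Icc

lemma valcompVert_mem_box (hπ1 : π1 ∈ stdSimplex ℝ A1) {αb : A1 → O → S → ℝ}
    (hαb : ∀ a1 o, αb a1 o ∈ Λ) (hbox : Λ ⊆ G.box) :
    G.valcompVert π1 αb ∈ G.box := by
  intro s
  have hphi : ∀ a2, G.Lval ≤ G.phiF π1 αb s a2 ∧ G.phiF π1 αb s a2 ≤ G.Uval := by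
    intro a2
    have hinner : ∀ a1, G.Lval ≤ (∑ o, ∑ s', G.T s a1 a2 o s' * αb a1 o s')
        ∧ (∑ o, ∑ s', G.T s a1 a2 o s' * αb a1 o s') ≤ G.Uval := by
      intro a1
      have hTc : ∀ c : ℝ, ∑ o, ∑ s', G.T s a1 a2 o s' * c = c := by
        intro c
        simp only [← Finset.sum_mul]
        rw [G.T_sum s a1 a2, one_mul]
      constructor
      · rw [← hTc G.Lval]
        refine Finset.sum_le_sum fun o _ => Finset.sum_le_sum fun s' _ =>
          mul_le_mul_of_nonneg_left ((hbox (hαb a1 o)) s').1 (G.T_nonneg s a1 a2 o s')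
      · rw [← hTc G.Uval]
        refine Finset.sum_le_sum fun o _ => Finset.sum_le_sum fun s' _ =>
          mul_le_mul_of_nonneg_left ((hbox (hαb a1 o)) s').2 (G.T_nonneg s a1 a2 o s')
    have hterm : ∀ a1, π1 a1 * G.Lval ≤ π1 a1 * (G.R s a1 a2
        + G.γ * ∑ o, ∑ s', G.T s a1 a2 o s' * αb a1 o s')
        ∧ π1 a1 * (G.R s a1 a2 + G.γ * ∑ o, ∑ s', G.T s a1 a2 o s' * αb a1 o s')
          ≤ π1 a1 * G.Uval := by
      intro a1
      have h1 := (hinner a1).1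
      have h2 := (hinner a1).2
      have hR1 := rmin_le_R (G := G) s a1 a2
      have hR2 := R_le_rmax (G := G) s a1 a2
      have hL := Lval_fix (G := G)
      have hU := Uval_fix (G := G)
      have hγ := gamma_nonneg (G := G)
      constructor
      · refine mul_le_mul_of_nonneg_left ?_ (hπ1.1 a1)
        nlinarith
      · refine mul_le_mul_of_nonneg_left ?_ (hπ1.1 a1)
        nlinarith
    have hsum : ∀ c : ℝ, ∑ a1, π1 a1 * c = c := by
      intro c
      rw [← Finset.sum_mul, hπ1.2, one_mul]
    rw [phiF]
    constructor
    · rw [← hsum G.Lval]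
      exact Finset.sum_le_sum fun a1 _ => (hterm a1).1
    · rw [← hsum G.Uval]
      exact Finset.sum_le_sum fun a1 _ => (hterm a1).2
  constructor
  · rw [valcompVert_eq]
    refine Finset.le_inf' _ _ fun a2 _ => (hphi a2).1
  · rw [valcompVert_eq]
    obtain ⟨a2⟩ : Nonempty A2 := inferInstance
    exact le_trans (Finset.inf'_le _ (Finset.mem_univ a2)) (hphi a2).2

lemma vcSet_subset_box (hbox : Λ ⊆ G.box) : G.vcSet Λ ⊆ G.box := by
  rintro v ⟨π1, hπ1, αb, hαb, rfl⟩
  exact valcompVert_mem_box hπ1 (mem_polSet.1 hαb) hbox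

lemma vcSet_nonempty (hne : Λ.Nonempty) : (G.vcSet Λ).Nonempty := by
  obtain ⟨α, hα⟩ := hne
  obtain ⟨π1, hπ1⟩ := stdSimplex_ne A1
  exact ⟨_, π1, hπ1, fun _ _ => α, mem_polSet.2 fun _ _ => hα, rfl⟩

lemma nextL_subset_box (hbox : Λ ⊆ G.box) : G.nextL Λ ⊆ G.box :=
  closure_minimal (convexHull_min (vcSet_subset_box hbox) box_convex) box_closed

lemma nextL_convex : Convex ℝ (G.nextL Λ) := (convex_convexHull ℝ _).closure

lemma nextL_compact (hbox : Λ ⊆ G.box) : IsCompact (G.nextL Λ) :=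
  box_compact.of_isClosed_subset isClosed_closure (nextL_subset_box hbox)

lemma nextL_nonempty (hne : Λ.Nonempty) : (G.nextL Λ).Nonempty := by
  obtain ⟨v, hv⟩ := vcSet_nonempty (G := G) hne
  exact ⟨v, subset_closure (subset_convexHull ℝ _ hv)⟩

lemma VLam_nextL (hne : Λ.Nonempty) (hbox : Λ ⊆ G.box) (b : S → ℝ) :
    VLam (G.nextL Λ) b = VLam (G.vcSet Λ) b := by
  apply le_antisymm
  · apply csSup_le ((nextL_nonempty hne).image _)
    rintro x ⟨α, hα, rfl⟩
    set W := VLam (G.vcSet Λ) b with hW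
    have hK : G.vcSet Λ ⊆ {β : S → ℝ | lineval β b ≤ W} := by
      intro β hβ
      exact VLam_ge (vcSet_subset_box hbox) hβ b
    have hKconv : Convex ℝ {β : S → ℝ | lineval β b ≤ W} := by
      intro β₁ h₁ β₂ h₂ a c ha hc hac
      simp only [Set.mem_setOf_eq] at h₁ h₂ ⊢
      rw [lineval_comb']
      calc a * lineval β₁ b + c * lineval β₂ b
          ≤ a * W + c * W := by
            exact add_le_add (mul_le_mul_of_nonneg_left h₁ ha)
              (mul_le_mul_of_nonneg_left h₂ hc)
      _ = W := by rw [← add_mul, hac, one_mul]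
    have hKclosed : IsClosed {β : S → ℝ | lineval β b ≤ W} :=
      isClosed_le (lineval_continuous b) continuous_const
    exact closure_minimal (convexHull_min hK hKconv) hKclosed hα
  · apply csSup_le_csSup (VLam_bddAbove (nextL_subset_box hbox) b)
      (((vcSet_nonempty hne)).image _)
    exact Set.image_mono fun v hv => subset_closure (subset_convexHull ℝ _ hv)

lemma lineval_valcompVert (αb : A1 → O → S → ℝ) :
    lineval (G.valcompVert π1 αb) b = G.valcomp π1 αb b := rfl

lemma Hop_VLam (hb : b ∈ stdSimplex ℝ S) (hne : Λ.Nonempty) (hcomp : IsCompact Λ)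
    (hconv : Convex ℝ Λ) (hbox : Λ ⊆ G.box) :
    G.Hop (VLam Λ) b = VLam (G.nextL Λ) b := by
  rw [VLam_nextL hne hbox]
  have hVb : ∀ p ∈ stdSimplex ℝ S, G.Lval ≤ VLam Λ p ∧ VLam Λ p ≤ G.Uval := fun p hp =>
    ⟨Lval_le_VLam hne hbox hp, VLam_le_Uval hne hcomp hbox hp⟩
  have hvc_bdd := VLam_bddAbove (G := G) (vcSet_subset_box hbox) b
  have hvc_ne := (vcSet_nonempty (G := G) hne).image (fun α => lineval α b)
  apply le_antisymm
  · rw [Hop]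
    refine ciSup_le fun π1 => ?_
    by_contra hlt
    push_neg at hlt
    set W := VLam (G.vcSet Λ) b with hWdef
    set I := ⨅ π2 : ↥(Pi2 S A2), G.stageU (VLam Λ) b π1.1 π2.1 with hIdef
    have hWI : W < I := hlt
    set t := (W + I) / 2 with htdef
    have hWt : W < t := by rw [htdef]; linarith
    have htI : t < I := by rw [htdef]; linarith
    have hcov : ∀ αb : A1 → O → S → ℝ, (∀ a1 o, αb a1 o ∈ Λ) →
        G.valcomp π1.1 αb b < t := by
      intro αb hαb
      refine lt_of_le_of_lt ?_ hWt
      rw [← lineval_valcompVert]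
      exact le_csSup hvc_bdd ⟨_, ⟨π1.1, π1.2, αb, mem_polSet.2 hαb, rfl⟩, rfl⟩
    obtain ⟨π2, hπ2, hall⟩ := minimax_app hb π1.2 hconv hcomp hne hbox t hcov
    obtain ⟨αb, hαmem, heq, _⟩ := stageU_eq_attained hb π1.2 hπ2 hne hcomp hbox
    have hstage : G.stageU (VLam Λ) b π1.1 π2 < t := by
      rw [heq]; exact hall αb hαmem
    have hIle : I ≤ G.stageU (VLam Λ) b π1.1 π2 :=
      ciInf_le (iInf_bddBelow hb π1.2 hVb) ⟨π2, hπ2⟩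
    linarith
  · apply csSup_le hvc_ne
    rintro x ⟨v, ⟨π1, hπ1, αb, hαb, rfl⟩, rfl⟩
    have hx : (fun α => lineval α b) (G.valcompVert π1 αb) = G.valcomp π1 αb b := rfl
    rw [hx]
    have h1 : ∀ π2 : ↥(Pi2 S A2), G.valcomp π1 αb b ≤ G.stageU (VLam Λ) b π1 π2.1 := by
      intro π2
      obtain ⟨_, _, _, hub⟩ := stageU_eq_attained hb hπ1 π2.2 hne hcomp hbox
      exact le_trans (valcomp_le_PhiFun hb π2.2 αb) (hub αb (mem_polSet.1 hαb))
    rw [Hop]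
    refine le_trans (le_ciInf h1) (le_ciSup (iSup_bddAbove hb hVb) ⟨π1, hπ1⟩)

end NextL

end OSPOSG

namespace OSPOSG

variable {S A1 A2 O : Type*} [Fintype S] [Fintype A1] [Fintype A2] [Fintype O]
  [Nonempty S] [Nonempty A1] [Nonempty A2] [Nonempty O]

/-- the α-vector set iteration started from the singleton `{L·1}` -/
def Lseq (G : OSPOSG S A1 A2 O) : ℕ → Set (S → ℝ)
  | 0 => {fun _ => G.Lval}
  | n + 1 => G.nextL (G.Lseq n)

lemma Lseq_props (G : OSPOSG S A1 A2 O) (n : ℕ) :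
    (G.Lseq n).Nonempty ∧ IsCompact (G.Lseq n) ∧ Convex ℝ (G.Lseq n) ∧ G.Lseq n ⊆ G.box := by
  induction n with
  | zero =>
    refine ⟨⟨_, rfl⟩, isCompact_singleton, convex_singleton _, ?_⟩
    intro α hα
    have hzero : G.Lseq 0 = {fun _ => G.Lval} := rfl
    rw [hzero, Set.mem_singleton_iff] at hα
    subst hα
    intro s
    exact ⟨le_refl _, Lval_le_Uval⟩
  | succ n ih =>
    exact ⟨nextL_nonempty ih.1, nextL_compact ih.2.2.2, nextL_convex,
      nextL_subset_box ih.2.2.2⟩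

lemma lip_continuousOn {k : ℝ} (hk : 0 ≤ k) {f : (S → ℝ) → ℝ} (hf : LipOnSimplex k f) :
    ContinuousOn f (stdSimplex ℝ S) := by
  intro p hp
  rw [Metric.continuousWithinAt_iff]
  intro ε hε
  set K : ℝ := k * (Fintype.card S : ℝ) + 1 with hK
  have hKpos : 0 < K := by positivity
  refine ⟨ε / K, by positivity, ?_⟩
  intro q hq hdist
  have h1 : |f q - f p| ≤ k * l1dist q p := hf q hq p hp
  have h2 : l1dist q p ≤ (Fintype.card S : ℝ) * dist q p := by
    rw [l1dist]
    calc ∑ s, |q s - p s| ≤ ∑ _s : S, dist q p := by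
          refine Finset.sum_le_sum fun s _ => ?_
          rw [← Real.dist_eq]
          exact dist_le_pi_dist q p s
    _ = (Fintype.card S : ℝ) * dist q p := by
        rw [Finset.sum_const, nsmul_eq_mul, Finset.card_univ]
  have h3 : k * l1dist q p ≤ K * dist q p := by
    have hd0 : 0 ≤ dist q p := dist_nonneg
    calc k * l1dist q p ≤ k * ((Fintype.card S : ℝ) * dist q p) :=
          mul_le_mul_of_nonneg_left h2 hk
    _ = (k * (Fintype.card S : ℝ)) * dist q p := by ring
    _ ≤ K * dist q p := by
        refine mul_le_mul_of_nonneg_right ?_ hd0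
        rw [hK]; linarith
  have h4 : K * dist q p < K * (ε / K) := by
    exact mul_lt_mul_of_pos_left hdist hKpos
  rw [Real.dist_eq]
  calc |f q - f p| ≤ K * dist q p := le_trans h1 h3
  _ < K * (ε / K) := h4
  _ = ε := by field_simp

lemma l1dist_comm (p q : S → ℝ) : l1dist p q = l1dist q p := by
  rw [l1dist, l1dist]
  exact Finset.sum_congr rfl fun s _ => abs_sub_comm _ _

theorem Hop_unique_fixpoint' (G : OSPOSG S A1 A2 O) :
    ∃ Vd : (S → ℝ) → ℝ,
      (ConvexOn ℝ (stdSimplex ℝ S) Vd ∧ ContinuousOn Vd (stdSimplex ℝ S) ∧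
        (∀ b ∈ stdSimplex ℝ S, G.Hop Vd b = Vd b) ∧
        LipOnSimplex G.δval Vd ∧
        (∀ b ∈ stdSimplex ℝ S, G.Lval ≤ Vd b ∧ Vd b ≤ G.Uval)) ∧
      (∀ V' : (S → ℝ) → ℝ, ConvexOn ℝ (stdSimplex ℝ S) V' →
        ContinuousOn V' (stdSimplex ℝ S) →
        (∀ b ∈ stdSimplex ℝ S, G.Hop V' b = V' b) →
        ∀ b ∈ stdSimplex ℝ S, V' b = Vd b) ∧
      (∀ V0 : (S → ℝ) → ℝ, ConvexOn ℝ (stdSimplex ℝ S) V0 →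
        ContinuousOn V0 (stdSimplex ℝ S) →
        (∀ b ∈ stdSimplex ℝ S, G.Lval ≤ V0 b ∧ V0 b ≤ G.Uval) →
        ∀ Vseq : ℕ → (S → ℝ) → ℝ, Vseq 0 = V0 → (∀ n : ℕ, Vseq (n + 1) = G.Hop (Vseq n)) →
          TendstoUniformlyOn (fun n => Vseq n) Vd atTop (stdSimplex ℝ S)) := by
  classical
  set Vn : ℕ → (S → ℝ) → ℝ := fun n => VLam (G.Lseq n) with hVn
  have hγ0 : (0:ℝ) ≤ G.γ := gamma_nonneg
  have hγ1 : G.γ < 1 := G.γ_lt_one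
  have hUL : (0:ℝ) ≤ G.Uval - G.Lval := by linarith [Lval_le_Uval (G := G)]
  have h1γ : (0:ℝ) < 1 - G.γ := one_sub_gamma_pos
  set E0 : ℝ := (G.Uval - G.Lval) / (1 - G.γ) with hE0def
  have hE00 : 0 ≤ E0 := div_nonneg hUL (le_of_lt h1γ)
  have hne : ∀ n, (G.Lseq n).Nonempty := fun n => (G.Lseq_props n).1
  have hcomp : ∀ n, IsCompact (G.Lseq n) := fun n => (G.Lseq_props n).2.1
  have hconvΛ : ∀ n, Convex ℝ (G.Lseq n) := fun n => (G.Lseq_props n).2.2.1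
  have hboxΛ : ∀ n, G.Lseq n ⊆ G.box := fun n => (G.Lseq_props n).2.2.2
  have hstep : ∀ n, ∀ b ∈ stdSimplex ℝ S, G.Hop (Vn n) b = Vn (n + 1) b := by
    intro n b hb
    exact Hop_VLam hb (hne n) (hcomp n) (hconvΛ n) (hboxΛ n)
  have hbounds : ∀ n, ∀ p ∈ stdSimplex ℝ S, G.Lval ≤ Vn n p ∧ Vn n p ≤ G.Uval := by
    intro n p hp
    exact ⟨Lval_le_VLam (hne n) (hboxΛ n) hp, VLam_le_Uval (hne n) (hcomp n) (hboxΛ n) hp⟩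
  have hmono1 : ∀ n, ∀ b ∈ stdSimplex ℝ S, Vn n b ≤ Vn (n + 1) b := by
    intro n
    induction n with
    | zero =>
      intro b hb
      have hV0 : Vn 0 b = G.Lval := by
        have himg : (fun α => lineval α b) '' (G.Lseq 0) = {lineval (fun _ => G.Lval) b} := by
          rw [show G.Lseq 0 = {fun _ => G.Lval} from rfl, Set.image_singleton]
        rw [hVn]
        simp only [VLam, himg, csSup_singleton]
        rw [lineval, ← Finset.sum_mul, hb.2, one_mul]
      rw [hV0, ← hstep 0 b hb]
      exact (Hop_bounds hb (hbounds 0)).1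
    | succ n ih =>
      intro b hb
      rw [← hstep n b hb, ← hstep (n+1) b hb]
      refine le_trans (Hop_le_add (G := G) hb (hbounds n) (hbounds (n+1)) (M := 0)
        (fun p hp => by linarith [ih p hp])) ?_
      rw [mul_zero, add_zero]
  have hmono : ∀ m n, m ≤ n → ∀ b ∈ stdSimplex ℝ S, Vn m b ≤ Vn n b := by
    intro m n hmn
    induction n with
    | zero =>
      intro b hb
      have : m = 0 := Nat.le_zero.1 hmn
      subst this; exact le_refl _
    | succ n ih =>
      intro b hb
      rcases Nat.lt_or_ge m (n+1) with h | h
      · exact le_trans (ih (Nat.lt_succ_iff.1 h) b hb) (hmono1 n b hb)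
      · have : m = n + 1 := le_antisymm hmn h
        subst this; exact le_refl _
  have hdiff : ∀ n, ∀ b ∈ stdSimplex ℝ S, Vn (n+1) b - Vn n b ≤ G.γ ^ n * (G.Uval - G.Lval) := by
    intro n
    induction n with
    | zero =>
      intro b hb
      rw [pow_zero, one_mul]
      linarith [(hbounds 1 b hb).2, (hbounds 0 b hb).1]
    | succ n ih =>
      intro b hb
      rw [← hstep (n+1) b hb, ← hstep n b hb]
      have := Hop_le_add (G := G) hb (hbounds (n+1)) (hbounds n)
        (M := G.γ ^ n * (G.Uval - G.Lval))
        (fun p hp => by linarith [ih p hp])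
      have hpow : G.γ * (G.γ ^ n * (G.Uval - G.Lval)) = G.γ ^ (n+1) * (G.Uval - G.Lval) := by
        rw [pow_succ]; ring
      linarith [hpow ▸ this]
  have htel : ∀ k n, ∀ b ∈ stdSimplex ℝ S,
      Vn (n + k) b - Vn n b ≤ ∑ j ∈ Finset.range k, G.γ ^ (n + j) * (G.Uval - G.Lval) := by
    intro k
    induction k with
    | zero => intro n b hb; simp
    | succ k ih =>
      intro n b hb
      have h1 := hdiff (n + k) b hb
      have h2 := ih n b hb
      rw [Finset.sum_range_succ]
      have : n + (k + 1) = (n + k) + 1 := by omega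
      rw [this]
      linarith
  have hgeosum : ∀ k : ℕ, ∑ j ∈ Finset.range k, G.γ ^ j ≤ 1 / (1 - G.γ) := by
    intro k
    induction k with
    | zero =>
      simp only [Finset.range_zero, Finset.sum_empty]
      exact div_nonneg zero_le_one h1γ.le
    | succ k ih =>
      rw [geom_sum_succ]
      have h1 : G.γ * ∑ j ∈ Finset.range k, G.γ ^ j ≤ G.γ * (1 / (1 - G.γ)) :=
        mul_le_mul_of_nonneg_left ih hγ0
      have h2 : G.γ * (1 / (1 - G.γ)) + 1 = 1 / (1 - G.γ) := by field_simp; ring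
      linarith
  have hgeo : ∀ n k, ∑ j ∈ Finset.range k, G.γ ^ (n + j) * (G.Uval - G.Lval)
      ≤ G.γ ^ n * E0 := by
    intro n k
    have heq : ∑ j ∈ Finset.range k, G.γ ^ (n + j) * (G.Uval - G.Lval)
        = G.γ ^ n * ((G.Uval - G.Lval) * ∑ j ∈ Finset.range k, G.γ ^ j) := by
      rw [Finset.mul_sum, Finset.mul_sum]
      refine Finset.sum_congr rfl fun j _ => ?_
      rw [pow_add]; ring
    rw [heq, hE0def]
    have h1 : (G.Uval - G.Lval) * ∑ j ∈ Finset.range k, G.γ ^ j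
        ≤ (G.Uval - G.Lval) * (1 / (1 - G.γ)) :=
      mul_le_mul_of_nonneg_left (hgeosum k) hUL
    have h2 : (G.Uval - G.Lval) * (1 / (1 - G.γ)) = (G.Uval - G.Lval) / (1 - G.γ) := by
      field_simp
    refine mul_le_mul_of_nonneg_left ?_ (pow_nonneg hγ0 n)
    rw [← h2]; exact h1
  set Vd : (S → ℝ) → ℝ := fun b => ⨆ n, Vn n b with hVddef
  have hbddrange : ∀ b : S → ℝ, BddAbove (Set.range fun n => Vn n b) := by
    intro b
    refine ⟨∑ s, |b s| * max |G.Lval| |G.Uval|, ?_⟩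
    rintro x ⟨n, rfl⟩
    refine csSup_le ((hne n).image _) ?_
    rintro y ⟨α, hα, rfl⟩
    exact lineval_abs_le_of_box (hboxΛ n) hα b
  have hVd_ge : ∀ (n : ℕ) (b : S → ℝ), Vn n b ≤ Vd b := fun n b => le_ciSup (hbddrange b) n
  have hVd_bounds : ∀ b ∈ stdSimplex ℝ S, G.Lval ≤ Vd b ∧ Vd b ≤ G.Uval := by
    intro b hb
    constructor
    · exact le_trans (hbounds 0 b hb).1 (hVd_ge 0 b)
    · exact ciSup_le fun n => (hbounds n b hb).2
  have hE : ∀ n, ∀ b ∈ stdSimplex ℝ S, Vd b - Vn n b ≤ G.γ ^ n * E0 := by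
    intro n b hb
    have h : Vd b ≤ Vn n b + G.γ ^ n * E0 := by
      refine ciSup_le fun m => ?_
      rcases le_or_gt m n with hmn | hmn
      · have := hmono m n hmn b hb
        have hnn : 0 ≤ G.γ ^ n * E0 := mul_nonneg (pow_nonneg hγ0 n) hE00
        linarith
      · obtain ⟨k, rfl⟩ : ∃ k, m = n + k := ⟨m - n, by omega⟩
        have h1 := htel k n b hb
        have h2 := hgeo n k
        linarith
    linarith
  have habs : ∀ n, ∀ b ∈ stdSimplex ℝ S, |Vd b - Vn n b| ≤ G.γ ^ n * E0 := by
    intro n b hb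
    rw [abs_le]
    constructor
    · have := hVd_ge n b
      have hnn : 0 ≤ G.γ ^ n * E0 := mul_nonneg (pow_nonneg hγ0 n) hE00
      linarith
    · exact hE n b hb
  have hfix : ∀ b ∈ stdSimplex ℝ S, G.Hop Vd b = Vd b := by
    intro b hb
    have key : ∀ n : ℕ, |G.Hop Vd b - Vd b| ≤ (2 * G.γ * E0) * G.γ ^ n := by
      intro n
      have h1 : |G.Hop Vd b - G.Hop (Vn n) b| ≤ G.γ * (G.γ ^ n * E0) :=
        Hop_abs_le (G := G) hb hVd_bounds (hbounds n) (fun p hp => habs n p hp)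
      have h2 : G.Hop (Vn n) b = Vn (n+1) b := hstep n b hb
      have h3 : |Vn (n+1) b - Vd b| ≤ G.γ ^ (n+1) * E0 := by
        rw [abs_sub_comm]; exact habs (n+1) b hb
      calc |G.Hop Vd b - Vd b|
          ≤ |G.Hop Vd b - Vn (n+1) b| + |Vn (n+1) b - Vd b| := abs_sub_le _ _ _
      _ ≤ G.γ * (G.γ ^ n * E0) + G.γ ^ (n+1) * E0 := by
          rw [h2] at h1; exact add_le_add h1 h3
      _ = (2 * G.γ * E0) * G.γ ^ n := by rw [pow_succ]; ring
    have hlim : Filter.Tendsto (fun n => (2 * G.γ * E0) * G.γ ^ n) Filter.atTop (nhds 0) := by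
      have := (tendsto_pow_atTop_nhds_zero_of_lt_one hγ0 hγ1).const_mul (2 * G.γ * E0)
      simpa using this
    have h0 : |G.Hop Vd b - Vd b| ≤ 0 := ge_of_tendsto' hlim key
    have := abs_nonneg (G.Hop Vd b - Vd b)
    have : |G.Hop Vd b - Vd b| = 0 := le_antisymm h0 this
    have := abs_eq_zero.1 this
    linarith [this]
  have hconvex : ConvexOn ℝ (stdSimplex ℝ S) Vd := by
    refine ⟨convex_stdSimplex ℝ S, ?_⟩
    intro x hx y hy a c ha hc hac
    refine ciSup_le fun n => ?_
    have h1 : Vn n (a • x + c • y) ≤ a * Vn n x + c * Vn n y :=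
      VLam_convex (hne n) (hcomp n) (hboxΛ n) ha hc
    calc Vn n (a • x + c • y) ≤ a * Vn n x + c * Vn n y := h1
    _ ≤ a * Vd x + c * Vd y :=
        add_le_add (mul_le_mul_of_nonneg_left (hVd_ge n x) ha)
          (mul_le_mul_of_nonneg_left (hVd_ge n y) hc)
    _ = a • Vd x + c • Vd y := by simp [smul_eq_mul]
  have hlip : LipOnSimplex G.δval Vd := by
    intro p hp q hq
    rw [abs_sub_le_iff]
    constructor
    · have h : Vd p ≤ Vd q + G.δval * l1dist p q := by
        refine ciSup_le fun n => ?_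
        have h1 := VLam_lip (hne n) (hcomp n) (hboxΛ n) hp hq
        have h2 := (abs_sub_le_iff.1 h1).1
        linarith [hVd_ge n q]
      linarith
    · have h : Vd q ≤ Vd p + G.δval * l1dist p q := by
        refine ciSup_le fun n => ?_
        have h1 := VLam_lip (hne n) (hcomp n) (hboxΛ n) hq hp
        have h2 := (abs_sub_le_iff.1 h1).1
        rw [l1dist_comm q p] at h2
        linarith [hVd_ge n p]
      linarith
  have hcont : ContinuousOn Vd (stdSimplex ℝ S) :=
    lip_continuousOn delta_nonneg hlip
  refine ⟨Vd, ⟨hconvex, hcont, hfix, hlip, hVd_bounds⟩, ?_, ?_⟩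
  · -- uniqueness
    intro V' _ hcont' hfix' b hb
    obtain ⟨C1, hC1⟩ := (isCompact_stdSimplex ℝ S).exists_bound_of_continuousOn hcont'
    have hVdabs : ∀ p ∈ stdSimplex ℝ S, |Vd p| ≤ max |G.Lval| |G.Uval| := by
      intro p hp
      rw [abs_le]
      constructor
      · have := (hVd_bounds p hp).1
        have h2 : -(max |G.Lval| |G.Uval|) ≤ -|G.Lval| := by
          simp [le_max_left]
        have h3 : -|G.Lval| ≤ G.Lval := neg_abs_le _
        linarith
      · have := (hVd_bounds p hp).2
        have h3 : G.Uval ≤ |G.Uval| := le_abs_self _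
        have h2 : |G.Uval| ≤ max |G.Lval| |G.Uval| := le_max_right _ _
        linarith
    set M0 : ℝ := C1 + max |G.Lval| |G.Uval| with hM0def
    have hM0 : ∀ p ∈ stdSimplex ℝ S, |V' p - Vd p| ≤ M0 := by
      intro p hp
      have h1 : |V' p| ≤ C1 := by
        have := hC1 p hp
        rwa [Real.norm_eq_abs] at this
      calc |V' p - Vd p| ≤ |V' p| + |Vd p| := abs_sub _ _
      _ ≤ M0 := add_le_add h1 (hVdabs p hp)
    have hV'b : ∀ p ∈ stdSimplex ℝ S, -C1 ≤ V' p ∧ V' p ≤ C1 := by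
      intro p hp
      have := hC1 p hp
      rw [Real.norm_eq_abs, abs_le] at this
      exact this
    have hiter : ∀ n, ∀ p ∈ stdSimplex ℝ S, |V' p - Vd p| ≤ G.γ ^ n * M0 := by
      intro n
      induction n with
      | zero => intro p hp; rw [pow_zero, one_mul]; exact hM0 p hp
      | succ n ih =>
        intro p hp
        rw [← hfix' p hp, ← hfix p hp]
        have := Hop_abs_le (G := G) hp hV'b hVd_bounds (M := G.γ ^ n * M0) ih
        have hpow : G.γ * (G.γ ^ n * M0) = G.γ ^ (n+1) * M0 := by rw [pow_succ]; ring
        linarith [hpow ▸ this]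
    have hM00 : 0 ≤ M0 := le_trans (abs_nonneg _) (hM0 b hb)
    have hlim : Filter.Tendsto (fun n => G.γ ^ n * M0) Filter.atTop (nhds 0) := by
      have := (tendsto_pow_atTop_nhds_zero_of_lt_one hγ0 hγ1).mul_const M0
      simpa using this
    have h0 : |V' b - Vd b| ≤ 0 := ge_of_tendsto' hlim (fun n => hiter n b hb)
    have h1 := abs_nonneg (V' b - Vd b)
    have := abs_eq_zero.1 (le_antisymm h0 h1)
    linarith [this]
  · -- convergence of value iteration
    intro V0 _ _ hV0b Vseq h0 hstep'
    have hbnd : ∀ n, ∀ p ∈ stdSimplex ℝ S, G.Lval ≤ Vseq n p ∧ Vseq n p ≤ G.Uval := by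
      intro n
      induction n with
      | zero => intro p hp; rw [h0]; exact hV0b p hp
      | succ n ih =>
        intro p hp
        rw [hstep' n]
        exact Hop_bounds hp ih
    have hkey : ∀ n, ∀ p ∈ stdSimplex ℝ S,
        |Vseq n p - Vd p| ≤ G.γ ^ n * (G.Uval - G.Lval) := by
      intro n
      induction n with
      | zero =>
        intro p hp
        rw [pow_zero, one_mul, abs_le]
        constructor
        · linarith [(hbnd 0 p hp).1, (hVd_bounds p hp).2]
        · linarith [(hbnd 0 p hp).2, (hVd_bounds p hp).1]
      | succ n ih =>
        intro p hp
        rw [hstep' n, ← hfix p hp]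
        have := Hop_abs_le (G := G) hp (hbnd n) hVd_bounds
          (M := G.γ ^ n * (G.Uval - G.Lval)) ih
        have hpow : G.γ * (G.γ ^ n * (G.Uval - G.Lval))
            = G.γ ^ (n+1) * (G.Uval - G.Lval) := by rw [pow_succ]; ring
        linarith [hpow ▸ this]
    rw [Metric.tendstoUniformlyOn_iff]
    intro ε hε
    have hto : Filter.Tendsto (fun n => G.γ ^ n * (G.Uval - G.Lval)) Filter.atTop (nhds 0) := by
      have := (tendsto_pow_atTop_nhds_zero_of_lt_one hγ0 hγ1).mul_const (G.Uval - G.Lval)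
      simpa using this
    filter_upwards [hto.eventually (gt_mem_nhds hε)] with n hn
    intro x hx
    rw [Real.dist_eq, abs_sub_comm]
    exact lt_of_le_of_lt (hkey n x hx) hn

end OSPOSG



namespace OSPOSG

variable {S A1 A2 O : Type*} [Fintype S] [Fintype A1] [Fintype A2] [Fintype O]
  [Nonempty S] [Nonempty A1] [Nonempty A2] [Nonempty O]

/-- The Bellman operator `H` has a unique convex continuous fixpoint `V†` on the simplex;
`V†` is `δ`-Lipschitz (w.r.t. ℓ1) and takes values in `[L, U]`, and value iteration started
from any convex continuous `V₀` with values in `[L, U]` converges uniformly to `V†`. -/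
theorem Hop_unique_fixpoint (G : OSPOSG S A1 A2 O) :
    ∃ Vd : (S → ℝ) → ℝ,
      (ConvexOn ℝ (stdSimplex ℝ S) Vd ∧ ContinuousOn Vd (stdSimplex ℝ S) ∧
        (∀ b ∈ stdSimplex ℝ S, G.Hop Vd b = Vd b) ∧
        LipOnSimplex G.δval Vd ∧
        (∀ b ∈ stdSimplex ℝ S, G.Lval ≤ Vd b ∧ Vd b ≤ G.Uval)) ∧
      (∀ V' : (S → ℝ) → ℝ, ConvexOn ℝ (stdSimplex ℝ S) V' →
        ContinuousOn V' (stdSimplex ℝ S) →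
        (∀ b ∈ stdSimplex ℝ S, G.Hop V' b = V' b) →
        ∀ b ∈ stdSimplex ℝ S, V' b = Vd b) ∧
      (∀ V0 : (S → ℝ) → ℝ, ConvexOn ℝ (stdSimplex ℝ S) V0 →
        ContinuousOn V0 (stdSimplex ℝ S) →
        (∀ b ∈ stdSimplex ℝ S, G.Lval ≤ V0 b ∧ V0 b ≤ G.Uval) →
        ∀ Vseq : ℕ → (S → ℝ) → ℝ, Vseq 0 = V0 → (∀ n : ℕ, Vseq (n + 1) = G.Hop (Vseq n)) →
          TendstoUniformlyOn (fun n => Vseq n) Vd atTop (stdSimplex ℝ S)) := by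
  exact G.Hop_unique_fixpoint'

end OSPOSG
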